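/- If τ is a TSO witness for an attack A = (attacker, stinst, ldinst) in a parallel program P, with delayed store action st and load action ld as in the witness shape, then the trace Tr(τ) contains the happens-before cycle st po+ ld hb+ st; consequently P is not robust. -/

import Mathlib

set_option maxHeartbeats 1000000
set_option linter.unusedVariables false

namespace TSORob

attribute [local instance 10] Classical.propDecidable

noncomputable section

variable {Tid Lbl D : Type}

/-! ### Actions -/

/-- Actions: issue, store, load, and local actions (the latter covering
assignments, asserts and fences). -/
inductive Act (Tid D : Type) : Type where
  | issue (t : Tid)
  | store (t : Tid) (a v : D)
  | load  (t : Tid) (a v : D)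
  | loc   (t : Tid)

namespace Act

def thread : Act Tid D → Tid
  | .issue t => t
  | .store t _ _ => t
  | .load t _ _ => t
  | .loc t => t

def isStore : Act Tid D → Prop
  | .store _ _ _ => True
  | _ => False

def isIssue : Act Tid D → Prop
  | .issue _ => True
  | _ => False

def isLoad : Act Tid D → Prop
  | .load _ _ _ => True
  | _ => False

end Act

/-! ### Positions, matching of issues and stores, trace nodes -/

/-- Number of actions satisfying `p` among the first `i` actions of `τ`. -/
def cntP (τ : List (Act Tid D)) (p : Act Tid D → Prop) (i : ℕ) : ℕ :=
  ((τ.take i).filter fun a => decide (p a)).length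

/-- Position of the `k`-th (0-based) action of `τ` satisfying `p`. -/
def posOfNth (τ : List (Act Tid D)) (p : Act Tid D → Prop) (k : ℕ) : Option ℕ :=
  ((List.range τ.length).filter fun i => decide (∃ a, τ[i]? = some a ∧ p a))[k]?

def isStoreOf (t : Tid) (x : Act Tid D) : Prop := x.isStore ∧ x.thread = t
def isIssueOf (t : Tid) (x : Act Tid D) : Prop := x.isIssue ∧ x.thread = t

/-- Position of the issue action corresponding to the store action at position `j`
(the `k`-th store action of a thread corresponds to its `k`-th issue action, as
buffers are FIFO). -/
def issueOfStore (τ : List (Act Tid D)) (j : ℕ) : Option ℕ :=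
  match τ[j]? with
  | some (.store t _ _) => posOfNth τ (isIssueOf t) (cntP τ (isStoreOf t) j)
  | _ => none

/-- Position of the store action corresponding to the issue action at position `i`. -/
def storeOfIssue (τ : List (Act Tid D)) (i : ℕ) : Option ℕ :=
  match τ[i]? with
  | some (.issue t) => posOfNth τ (isStoreOf t) (cntP τ (isIssueOf t) i)
  | _ => none

/-- Rank of the action at position `i` among non-store actions of its thread.
In the trace, an issue and its store form one node; nodes of a thread are
identified by this rank. -/
def rankAt (τ : List (Act Tid D)) (i : ℕ) : ℕ :=
  match τ[i]? with
  | some a => cntP τ (fun x => x.thread = a.thread ∧ ¬ x.isStore) i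
  | none => 0

/-- The trace node corresponding to the action at position `i` of `τ`: a pair of
the thread and the rank of the node in the thread's program order. A store
action yields the node of its issue action. -/
def nodeAt (τ : List (Act Tid D)) (i : ℕ) : Option (Tid × ℕ) :=
  match τ[i]? with
  | some (.store t _ _) => (issueOfStore τ i).map fun p => (t, rankAt τ p)
  | some a => some (a.thread, rankAt τ i)
  | none => none

/-- Relabel the issue actions of a per-thread action sequence by the
corresponding store actions (given in FIFO order) and drop the store actions:
this yields the per-thread node labels of the trace. -/
def mergeStores : List (Act Tid D) → List (Act Tid D) → List (Act Tid D)
  | [], _ => []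
  | .issue t :: rest, stores => stores.headD (.issue t) :: mergeStores rest stores.tail
  | .store _ _ _ :: rest, stores => mergeStores rest stores
  | .load t a v :: rest, stores => .load t a v :: mergeStores rest stores
  | .loc t :: rest, stores => .loc t :: mergeStores rest stores

/-- The sequence of node labels of thread `t` in the trace of `τ`. -/
def threadNodes (τ : List (Act Tid D)) (t : Tid) : List (Act Tid D) :=
  mergeStores (τ.filter fun a => decide (a.thread = t)) (τ.filter fun a => decide (isStoreOf t a))

/-! ### Traces -/

/-- A trace: per-thread node labels (program order is the per-thread order of
issuing, i.e. the order of the lists), a store order `so` and a source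
relation `src` on nodes.  A node is a pair (thread, rank in the thread). -/
structure Trace (Tid D : Type) where
  lab : Tid → List (Act Tid D)
  so : Tid × ℕ → Tid × ℕ → Prop
  src : Tid × ℕ → Tid × ℕ → Prop

namespace Trace

def labAt (T : Trace Tid D) (n : Tid × ℕ) : Option (Act Tid D) := (T.lab n.1)[n.2]?

/-- Program order: per-thread total order in which actions were issued. -/
def po (T : Trace Tid D) (m n : Tid × ℕ) : Prop :=
  m.1 = n.1 ∧ m.2 < n.2 ∧ n.2 < (T.lab n.1).length

/-- Conflict relation: a load conflicts with a store that overwrites the value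
the load reads (including the case where the load reads the initial value). -/
def cf (T : Trace Tid D) (m n : Tid × ℕ) : Prop :=
  ∃ a, (∃ t v, T.labAt m = some (.load t a v)) ∧ (∃ t v, T.labAt n = some (.store t a v)) ∧
    ((∃ p, T.src p m ∧ T.so p n) ∨ ¬ ∃ p, T.src p m)

/-- The happens-before relation `hb = po ∪ so ∪ src ∪ cf`. -/
def hb (T : Trace Tid D) (m n : Tid × ℕ) : Prop :=
  T.po m n ∨ T.so m n ∨ T.src m n ∨ T.cf m n

/-- Acyclicity of a relation. -/
def Acyclic (r : α → α → Prop) : Prop := ¬ ∃ x, Relation.TransGen r x x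

end Trace

/-- Store order of a computation: per-address total order of the store actions. -/
def soRel (τ : List (Act Tid D)) (m n : Tid × ℕ) : Prop :=
  ∃ i j a, i < j ∧ (∃ t v, τ[i]? = some (.store t a v)) ∧ (∃ t v, τ[j]? = some (.store t a v)) ∧
    nodeAt τ i = some m ∧ nodeAt τ j = some n

/-- At position `p`, position `i` is a pending (issued but not yet flushed)
issue of thread `t` with address `a`. -/
def pendingIssue (τ : List (Act Tid D)) (t : Tid) (a : D) (p i : ℕ) : Prop :=
  i < p ∧ τ[i]? = some (Act.issue t) ∧
  ∃ j v, storeOfIssue τ i = some j ∧ p < j ∧ τ[j]? = some (.store t a v)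

/-- Source relation of a computation: each load reads either (early) from the
latest pending buffered store of its own thread to its address, or else from
the latest store action to its address that was flushed to memory before it. -/
def srcRel (τ : List (Act Tid D)) (m n : Tid × ℕ) : Prop :=
  ∃ p t a v, τ[p]? = some (.load t a v) ∧ nodeAt τ p = some n ∧
    ((∃ i, pendingIssue τ t a p i ∧ (∀ i', pendingIssue τ t a p i' → i' ≤ i) ∧
        nodeAt τ i = some m) ∨
     ((¬ ∃ i, pendingIssue τ t a p i) ∧
      ∃ j, j < p ∧ (∃ t' v', τ[j]? = some (.store t' a v')) ∧
        (∀ j', j' < p → (∃ t' v', τ[j']? = some (.store t' a v')) → j' ≤ j) ∧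
        nodeAt τ j = some m))

/-- The trace of a computation. -/
def traceOf (τ : List (Act Tid D)) : Trace Tid D :=
  ⟨fun t => threadNodes τ t, soRel τ, srcRel τ⟩


/-- Instructions: loads, stores, memory fences, local assignments, asserts
(and atomic test-and-set, i.e. a locked instruction).  Expressions are
functions of the register valuation. -/
inductive Instr (D : Type) : Type where
  | load   (r : ℕ) (ae : (ℕ → D) → D)
  | store  (ae ve : (ℕ → D) → D)
  | mfence
  | assign (r : ℕ) (e : (ℕ → D) → D)
  | assert (e : (ℕ → D) → D)
  | tas    (r : ℕ) (ae ve : (ℕ → D) → D)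

/-- A labelled instruction `l : instr; goto l'`. -/
structure LInstr (Lbl D : Type) : Type where
  src : Lbl
  ins : Instr D
  dst : Lbl

/-- A thread: declared registers `0, …, nregs-1`, an initial label, and a
finite list of labelled instructions (several instructions may share a label,
giving branching). -/
structure ThreadCode (Lbl D : Type) : Type where
  nregs : ℕ
  init : Lbl
  code : List (LInstr Lbl D)

/-- A parallel program: a finite family of threads. -/
structure Program (Tid Lbl D : Type) : Type where
  threads : Tid → ThreadCode Lbl D

/-! ### TSO semantics -/

/-- A TSO configuration: program counters, memory, per-thread registers and
per-thread FIFO store buffers of address–value pairs. -/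
structure Conf (Tid Lbl D : Type) : Type where
  pc : Tid → Lbl
  mem : D → D
  regs : Tid → ℕ → D
  buf : Tid → List (D × D)

/-- Pointwise function update. -/
def updf {α β : Type _} (f : α → β) (x : α) (b : β) : α → β :=
  fun y => if y = x then b else f y

/-- The value for address `a` held by the latest buffered store in `β`, if any. -/
def bufVal (β : List (D × D)) (a : D) : Option D :=
  ((β.filter fun p => decide (p.1 = a)).getLast?).map Prod.snd

/-- The initial configuration: initial labels, all registers and addresses
hold `0`, all buffers are empty. -/
def initConf [Zero D] (P : Program Tid Lbl D) : Conf Tid Lbl D :=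
  ⟨fun t => (P.threads t).init, fun _ => 0, fun _ _ => 0, fun _ => []⟩

/-- Events: actions annotated with the instruction that generated them
(flushes of the buffer carry no instruction). -/
abbrev Ev (Tid Lbl D : Type) : Type := Act Tid D × Option (LInstr Lbl D)

/-- The TSO transition relation.  A step emits a list of events. -/
inductive Step [Zero D] (P : Program Tid Lbl D) :
    Conf Tid Lbl D → List (Ev Tid Lbl D) → Conf Tid Lbl D → Prop where
  | loadBuf (c : Conf Tid Lbl D) (t : Tid) (li : LInstr Lbl D) (r : ℕ)
      (ae : (ℕ → D) → D) (a v : D) :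
      li ∈ (P.threads t).code → c.pc t = li.src → li.ins = .load r ae →
      a = ae (c.regs t) → bufVal (c.buf t) a = some v →
      Step P c [(.load t a v, some li)]
        ⟨updf c.pc t li.dst, c.mem, updf c.regs t (updf (c.regs t) r v), c.buf⟩
  | loadMem (c : Conf Tid Lbl D) (t : Tid) (li : LInstr Lbl D) (r : ℕ)
      (ae : (ℕ → D) → D) (a v : D) :
      li ∈ (P.threads t).code → c.pc t = li.src → li.ins = .load r ae →
      a = ae (c.regs t) → bufVal (c.buf t) a = none → v = c.mem a →
      Step P c [(.load t a v, some li)]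
        ⟨updf c.pc t li.dst, c.mem, updf c.regs t (updf (c.regs t) r v), c.buf⟩
  | storeIssue (c : Conf Tid Lbl D) (t : Tid) (li : LInstr Lbl D)
      (ae ve : (ℕ → D) → D) (a v : D) :
      li ∈ (P.threads t).code → c.pc t = li.src → li.ins = .store ae ve →
      a = ae (c.regs t) → v = ve (c.regs t) →
      Step P c [(.issue t, some li)]
        ⟨updf c.pc t li.dst, c.mem, c.regs, updf c.buf t (c.buf t ++ [(a, v)])⟩
  | flush (c : Conf Tid Lbl D) (t : Tid) (a v : D) (β : List (D × D)) :
      c.buf t = (a, v) :: β →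
      Step P c [(.store t a v, none)]
        ⟨c.pc, updf c.mem a v, c.regs, updf c.buf t β⟩
  | fence (c : Conf Tid Lbl D) (t : Tid) (li : LInstr Lbl D) :
      li ∈ (P.threads t).code → c.pc t = li.src → li.ins = .mfence →
      c.buf t = [] →
      Step P c [(.loc t, some li)] ⟨updf c.pc t li.dst, c.mem, c.regs, c.buf⟩
  | assign (c : Conf Tid Lbl D) (t : Tid) (li : LInstr Lbl D) (r : ℕ)
      (e : (ℕ → D) → D) :
      li ∈ (P.threads t).code → c.pc t = li.src → li.ins = .assign r e →
      Step P c [(.loc t, some li)]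
        ⟨updf c.pc t li.dst, c.mem, updf c.regs t (updf (c.regs t) r (e (c.regs t))), c.buf⟩
  | assert (c : Conf Tid Lbl D) (t : Tid) (li : LInstr Lbl D) (e : (ℕ → D) → D) :
      li ∈ (P.threads t).code → c.pc t = li.src → li.ins = .assert e →
      e (c.regs t) ≠ 0 →
      Step P c [(.loc t, some li)] ⟨updf c.pc t li.dst, c.mem, c.regs, c.buf⟩
  | tas (c : Conf Tid Lbl D) (t : Tid) (li : LInstr Lbl D) (r : ℕ)
      (ae ve : (ℕ → D) → D) (a vold vnew : D) :
      li ∈ (P.threads t).code → c.pc t = li.src → li.ins = .tas r ae ve →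
      c.buf t = [] → a = ae (c.regs t) → vold = c.mem a → vnew = ve (c.regs t) →
      Step P c [(.load t a vold, some li), (.issue t, some li), (.store t a vnew, some li)]
        ⟨updf c.pc t li.dst, updf c.mem a vnew, updf c.regs t (updf (c.regs t) r vold), c.buf⟩

/-- Reflexive-transitive closure of `Step`, concatenating the emitted events. -/
inductive Steps [Zero D] (P : Program Tid Lbl D) :
    Conf Tid Lbl D → List (Ev Tid Lbl D) → Conf Tid Lbl D → Prop where
  | refl (c : Conf Tid Lbl D) : Steps P c [] c
  | trans (c₁ : Conf Tid Lbl D) (ρ₁ : List (Ev Tid Lbl D)) (c₂ : Conf Tid Lbl D)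
      (ρ₂ : List (Ev Tid Lbl D)) (c₃ : Conf Tid Lbl D) :
      Step P c₁ ρ₁ c₂ → Steps P c₂ ρ₂ c₃ → Steps P c₁ (ρ₁ ++ ρ₂) c₃

/-- A run of `P` from the initial configuration. -/
def Run [Zero D] (P : Program Tid Lbl D) (ρ : List (Ev Tid Lbl D)) (c : Conf Tid Lbl D) : Prop :=
  Steps P (initConf P) ρ c

/-- The action sequence of an annotated run. -/
def acts (ρ : List (Ev Tid Lbl D)) : List (Act Tid D) := ρ.map Prod.fst

/-- TSO computations: action sequences leading from the initial configuration
to a configuration in which all buffers are empty. -/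
def TSOComput [Zero D] (P : Program Tid Lbl D) (τ : List (Act Tid D)) : Prop :=
  ∃ ρ c, Run P ρ c ∧ acts ρ = τ ∧ ∀ t, c.buf t = []

/-- SC shape: every issue action is immediately followed by its store action
(no buffering).  TSO computations of this shape are exactly the SC
computations; fences then have no effect since buffers are always empty. -/
def SCshape (τ : List (Act Tid D)) : Prop :=
  ∀ i t, τ[i]? = some (.issue t) → ∃ a v, τ[i + 1]? = some (.store t a v)

/-- SC computations. -/
def SCComput [Zero D] (P : Program Tid Lbl D) (τ : List (Act Tid D)) : Prop :=
  TSOComput P τ ∧ SCshape τ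

def TSOTraces [Zero D] (P : Program Tid Lbl D) : Set (Trace Tid D) :=
  {T | ∃ τ, TSOComput P τ ∧ traceOf τ = T}

def SCTraces [Zero D] (P : Program Tid Lbl D) : Set (Trace Tid D) :=
  {T | ∃ τ, SCComput P τ ∧ traceOf τ = T}

/-- TSO robustness: the TSO traces coincide with the SC traces. -/
def Robust [Zero D] (P : Program Tid Lbl D) : Prop := TSOTraces P = SCTraces P

/-! ### Delays, violations -/

/-- Number of actions of thread `t` strictly between positions `i` and `j`. -/
def distBetween (τ : List (Act Tid D)) (t : Tid) (i j : ℕ) : ℕ :=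
  (((τ.take j).drop (i + 1)).filter fun a => decide (a.thread = t)).length

/-- The delay of the store action at position `j`: the distance between it and
its issue action. -/
def storeDelay (τ : List (Act Tid D)) (j : ℕ) : ℕ :=
  match τ[j]? with
  | some (.store t _ _) =>
      match issueOfStore τ j with
      | some i => distBetween τ t i j
      | none => 0
  | _ => 0

/-- The number of delays of a computation: the sum of the distances between
corresponding issue and store actions. -/
def delays (τ : List (Act Tid D)) : ℕ :=
  ((List.range τ.length).map (storeDelay τ)).sum

/-- A violating TSO computation: its trace is not an SC trace of the program. -/
def Violating [Zero D] (P : Program Tid Lbl D) (τ : List (Act Tid D)) : Prop :=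
  TSOComput P τ ∧ traceOf τ ∉ SCTraces P

/-- A minimal violation: a violating computation with the minimal number of
delays among all violating computations of `P`. -/
def MinViolation [Zero D] (P : Program Tid Lbl D) (τ : List (Act Tid D)) : Prop :=
  Violating P τ ∧ ∀ τ', Violating P τ' → delays τ ≤ delays τ'

/-! ### Happens-before through an infix -/

/-- One step of a happens-before path between positions of a computation:
the two positions denote nodes related by `hb` or by `po⁺` (an issue and its
corresponding store action denote the same node, which covers the issue
relation). -/
def hbStep (τ : List (Act Tid D)) (p q : ℕ) : Prop :=
  ∃ m n, nodeAt τ p = some m ∧ nodeAt τ q = some n ∧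
    (m = n ∨ (traceOf τ).hb m n ∨ Relation.TransGen (traceOf τ).po m n)

/-- `a` happens-before `b` through `β` (for `τ = α·a·β·b·γ`, `i` the position
of `a`, `j` the position of `b`): there is a subsequence `c₁ … cₙ` of `β`
such that consecutive elements of `a·c₁ … cₙ·b` are related by `hb ∪ po⁺`. -/
def hbThrough (τ : List (Act Tid D)) (i j : ℕ) : Prop :=
  ∃ l : List ℕ, List.Chain' (· < ·) (i :: l ++ [j]) ∧ List.Chain' (hbStep τ) (i :: l ++ [j])

/-! ### Attacks and TSO witnesses -/

/-- An attack: an attacker thread, a store instruction and a load instruction. -/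
structure Attack (Tid Lbl D : Type) : Type where
  attacker : Tid
  stinst : LInstr Lbl D
  ldinst : LInstr Lbl D

def isStoreInstr (li : LInstr Lbl D) : Prop := ∃ ae ve, li.ins = .store ae ve
def isLoadInstr (li : LInstr Lbl D) : Prop := ∃ r ae, li.ins = .load r ae

/-- The attack's instructions belong to the attacker thread and have the right
kinds. -/
def ValidAttack (P : Program Tid Lbl D) (A : Attack Tid Lbl D) : Prop :=
  A.stinst ∈ (P.threads A.attacker).code ∧ isStoreInstr A.stinst ∧
  A.ldinst ∈ (P.threads A.attacker).code ∧ isLoadInstr A.ldinst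

/-- The computation `τ₁ · isu · τ₂ · ld · τ₃ · st · τ₄` of a TSO witness. -/
def witnessWord (att : Tid) (τ₁ τ₂ τ₃ τ₄ : List (Act Tid D)) (aL vL aS vS : D) :
    List (Act Tid D) :=
  τ₁ ++ .issue att :: (τ₂ ++ .load att aL vL :: (τ₃ ++ .store att aS vS :: τ₄))

/-- Conditions (W1)–(W5) for a TSO witness
`τ = τ₁ · isu_st · τ₂ · ld · τ₃ · st · τ₄` of the attack `A`:
(W1) only the attacker delays stores; (W2) `st` is an instance of `stinst` and
the first delayed store of the attacker, `ld` is an instance of `ldinst` and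
the last action of the attacker overstepped by `st` (`τ₂` contains no fences
and no stores of the attacker); (W3) `ld hb⁺ a` for every action `a` in
`ld · τ₃ · st`; (W4) `τ₄` consists only of stores of the attacker issued
before `ld` and delayed past it; (W5) all these delayed stores have addresses
different from the address of `ld`. -/
def WitnessShape [Zero D] (P : Program Tid Lbl D) (A : Attack Tid Lbl D)
    (τ₁ τ₂ τ₃ τ₄ : List (Act Tid D)) (aL vL aS vS : D) : Prop :=
  ValidAttack P A ∧
  aS ≠ aL ∧
  (let att := A.attacker
   let τ : List (Act Tid D) := witnessWord att τ₁ τ₂ τ₃ τ₄ aL vL aS vS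
   let pIsu : ℕ := τ₁.length
   let pLd : ℕ := τ₁.length + 1 + τ₂.length
   let pSt : ℕ := τ₁.length + 1 + τ₂.length + 1 + τ₃.length
   -- τ is a TSO computation; the issue at pIsu stems from stinst, the load at
   -- pLd stems from ldinst, and the attacker executes no fence in between
   (∃ ρ c, Run P ρ c ∧ acts ρ = τ ∧ (∀ t, c.buf t = []) ∧
      (∃ ev, ρ[pIsu]? = some ev ∧ ev.2 = some A.stinst) ∧
      (∃ ev, ρ[pLd]? = some ev ∧ ev.2 = some A.ldinst) ∧
      (∀ q, pIsu < q → q < pLd →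
        ¬ ∃ li, ρ[q]? = some (Act.loc att, some li) ∧ li.ins = Instr.mfence)) ∧
   -- st is the store action corresponding to the issue action at pIsu
   issueOfStore τ pSt = some pIsu ∧
   -- (W1): the stores of all other threads immediately follow their issues
   (∀ t, t ≠ att → ∀ j a v, τ[j]? = some (.store t a v) → storeDelay τ j = 0) ∧
   -- (W2): st is the first delayed store of the attacker …
   (∀ j a v, j < pSt → τ[j]? = some (.store att a v) → storeDelay τ j = 0) ∧
   -- … and τ₂ contains no stores of the attacker (ld is the last overstepped action)
   (∀ x ∈ τ₂, ¬ isStoreOf att x) ∧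
   -- τ₃ contains only helper actions
   (∀ x ∈ τ₃, x.thread ≠ att) ∧
   -- (W3): ld happens-before every action in ld·τ₃·st
   (∀ q, pLd < q → q ≤ pSt → ∃ m n, nodeAt τ pLd = some m ∧ nodeAt τ q = some n ∧
      Relation.TransGen (traceOf τ).hb m n) ∧
   -- (W4): τ₄ consists only of stores of the attacker …
   (∀ x ∈ τ₄, ∃ a v, x = Act.store att a v ∧
      -- (W5): … whose addresses differ from the address of ld
      a ≠ aL) ∧
   -- (W4): … that were issued before ld
   (∀ j, pSt < j → ∀ a v, τ[j]? = some (.store att a v) →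
      ∃ i, issueOfStore τ j = some i ∧ i < pLd))

/-- A TSO witness for attack `A`. -/
def TSOWitness [Zero D] (P : Program Tid Lbl D) (A : Attack Tid Lbl D)
    (τ : List (Act Tid D)) : Prop :=
  ∃ τ₁ τ₂ τ₃ τ₄ aL vL aS vS,
    τ = witnessWord A.attacker τ₁ τ₂ τ₃ τ₄ aL vL aS vS ∧
    WitnessShape P A τ₁ τ₂ τ₃ τ₄ aL vL aS vS

/-- A feasible attack: an attack admitting a TSO witness. -/
def FeasibleAttack [Zero D] (P : Program Tid Lbl D) (A : Attack Tid Lbl D) : Prop :=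
  ValidAttack P A ∧ ∃ τ, TSOWitness P A τ
/-! ### The instrumentation (Section 5) -/

/-- The data domain of the instrumented program: base values, auxiliary delay
addresses `(a, d)` and tagged buffered values `(v, d)`, auxiliary
happens-before addresses `(a, hb)`, the fresh addresses `a_st`, `hb`, `suc`
(and the flag used in the parameterized instrumentation), access levels
(`acc 1` = load access, `acc 2` = store access; no access is the initial
value `0`), and the value `true`. -/
inductive IVal (D : Type) : Type where
  | base (v : D)
  | dAddr (a : D)
  | dVal (v : D)
  | hbAddr (a : D)
  | aSt
  | hbFlag
  | sucFlag
  | attFlag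
  | acc (k : ℕ)
  | tru

instance [Zero D] : Zero (IVal D) := ⟨.base 0⟩

/-- Read a base value (seeing through the delay tag). -/
def IVal.toD [Zero D] : IVal D → D
  | .base v => v
  | .dVal v => v
  | _ => (0 : D)

/-- Labels of the instrumented program: original labels, labels of the code
copy, and two kinds of fresh intermediate labels. -/
abbrev ILbl (Lbl : Type) : Type := Lbl ⊕ Lbl ⊕ (ℕ × ℕ × ℕ) ⊕ (Lbl × ℕ)

def olbl : Lbl → ILbl Lbl := Sum.inl
def clbl : Lbl → ILbl Lbl := fun l => Sum.inr (Sum.inl l)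
def nlbl : ℕ × ℕ × ℕ → ILbl Lbl := fun x => Sum.inr (Sum.inr (Sum.inl x))
def slbl : Lbl × ℕ → ILbl Lbl := fun x => Sum.inr (Sum.inr (Sum.inr x))

/-- Registers of the instrumented program: register `r` of the original
program becomes `r + 2`; registers `0`, `1` are the fresh auxiliary
registers. -/
def shiftRho [Zero D] (ρ : ℕ → IVal D) : ℕ → D := fun r => (ρ (r + 2)).toD

def liftE [Zero D] (e : (ℕ → D) → D) : (ℕ → IVal D) → IVal D :=
  fun ρ => .base (e (shiftRho ρ))
def dAddrE [Zero D] (e : (ℕ → D) → D) : (ℕ → IVal D) → IVal D :=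
  fun ρ => .dAddr (e (shiftRho ρ))
def dValE [Zero D] (e : (ℕ → D) → D) : (ℕ → IVal D) → IVal D :=
  fun ρ => .dVal (e (shiftRho ρ))
def hbAddrE [Zero D] (e : (ℕ → D) → D) : (ℕ → IVal D) → IVal D :=
  fun ρ => .hbAddr (e (shiftRho ρ))

def truE : (ℕ → IVal D) → IVal D := fun _ => .tru

/-- A condition as an expression: nonzero iff the condition holds. -/
def condE [Zero D] (p : (ℕ → IVal D) → Prop) : (ℕ → IVal D) → IVal D :=
  fun ρ => if p ρ then .tru else .base 0

/-- Lift an instruction of the original program to the instrumented domain. -/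
def liftInstr [Zero D] : Instr D → Instr (IVal D)
  | .load r ae => .load (r + 2) (liftE ae)
  | .store ae ve => .store (liftE ae) (liftE ve)
  | .mfence => .mfence
  | .assign r e => .assign (r + 2) (liftE e)
  | .assert e => .assert (liftE e)
  | .tas r ae ve => .tas (r + 2) (liftE ae) (liftE ve)

def liftLI [Zero D] (li : LInstr Lbl D) : LInstr (ILbl Lbl) (IVal D) :=
  ⟨olbl li.src, liftInstr li.ins, olbl li.dst⟩

/-- Instrumentation `⟪stinst⟫` of the attack's store (Equation (1)): execute
the store on the auxiliary delay address, record the used address in `a_st`,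
and move to the code copy. -/
def attMoveStore [Zero D] (st : LInstr Lbl D) : List (LInstr (ILbl Lbl) (IVal D)) :=
  match st.ins with
  | .store ae ve =>
      [⟨olbl st.src, .store (dAddrE ae) (dValE ve), nlbl (0, 0, 0)⟩,
       ⟨nlbl (0, 0, 0), .store (fun _ => .aSt) (liftE ae), clbl st.dst⟩]
  | _ => []

/-- Instrumentation `⟪ldinst⟫` of the attack's load (Equation (2)): check that
the load has not read its value early, raise the `hb` flag and set the
happens-before address of the load's address to load access; then the
attacker stops. -/
def attMoveLoad [Zero D] (ld : LInstr Lbl D) : List (LInstr (ILbl Lbl) (IVal D)) :=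
  match ld.ins with
  | .load _ ae =>
      [⟨clbl ld.src, .load 0 (dAddrE ae), nlbl (0, 1, 0)⟩,
       ⟨nlbl (0, 1, 0), .assert (condE fun ρ => ρ 0 = IVal.base 0), nlbl (0, 1, 1)⟩,
       ⟨nlbl (0, 1, 1), .store (fun _ => .hbFlag) truE, nlbl (0, 1, 2)⟩,
       ⟨nlbl (0, 1, 2), .store (hbAddrE ae) (fun _ => .acc 1), nlbl (0, 1, 3)⟩]
  | _ => []

/-- The attacker's code copy (Equations (3)–(6)): stores go to the auxiliary
delay addresses, loads read the buffered value from the delay address if there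
is one and memory otherwise, fences are deleted. -/
def attCopy [Zero D] (i : ℕ) (li : LInstr Lbl D) : List (LInstr (ILbl Lbl) (IVal D)) :=
  match li.ins with
  | .store ae ve => [⟨clbl li.src, .store (dAddrE ae) (dValE ve), clbl li.dst⟩]
  | .load r ae =>
      [⟨clbl li.src, .load 0 (dAddrE ae), nlbl (0, 2 + i, 0)⟩,
       ⟨nlbl (0, 2 + i, 0), .assert (condE fun ρ => ρ 0 = IVal.base 0), nlbl (0, 2 + i, 1)⟩,
       ⟨nlbl (0, 2 + i, 1), .load (r + 2) (liftE ae), clbl li.dst⟩,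
       ⟨nlbl (0, 2 + i, 0), .assert (condE fun ρ => ρ 0 ≠ IVal.base 0), nlbl (0, 2 + i, 2)⟩,
       ⟨nlbl (0, 2 + i, 2), .load (r + 2) (dAddrE ae), clbl li.dst⟩]
  | .mfence => []
  | .tas _ _ _ => []
  | ins => [⟨clbl li.src, liftInstr ins, clbl li.dst⟩]

/-- The instrumented attacker thread. -/
def attackerThread [Zero D] (st ld : LInstr Lbl D) (th : ThreadCode Lbl D) :
    ThreadCode (ILbl Lbl) (IVal D) :=
  ⟨th.nregs + 2, olbl th.init,
    th.code.map liftLI ++ attMoveStore st ++ attMoveLoad ld ++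
      (th.code.mapIdx fun i li => attCopy i li).flatten⟩

/-- Helpers executing the original code check that the `hb` flag has not been
raised (Equation (7)). -/
def helpGuard [Zero D] (i : ℕ) (li : LInstr Lbl D) : List (LInstr (ILbl Lbl) (IVal D)) :=
  [⟨olbl li.src, .load 0 (fun _ => .hbFlag), nlbl (1, i, 0)⟩,
   ⟨nlbl (1, i, 0), .assert (condE fun ρ => ρ 0 = IVal.base 0), nlbl (1, i, 1)⟩,
   ⟨nlbl (1, i, 1), liftInstr li.ins, olbl li.dst⟩]

/-- Transitions of a helper into its code copy (Equations (8), (9)): a load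
requires a previous store access to its address, a store requires at least a
load access and records a store access. -/
def helpMove [Zero D] (i : ℕ) (li : LInstr Lbl D) : List (LInstr (ILbl Lbl) (IVal D)) :=
  match li.ins with
  | .load r ae =>
      [⟨olbl li.src, .load 0 (hbAddrE ae), nlbl (1, i, 2)⟩,
       ⟨nlbl (1, i, 2), .assert (condE fun ρ => ρ 0 = IVal.acc 2), nlbl (1, i, 3)⟩,
       ⟨nlbl (1, i, 3), .load (r + 2) (liftE ae), clbl li.dst⟩]
  | .store ae ve =>
      [⟨olbl li.src, .load 0 (hbAddrE ae), nlbl (1, i, 2)⟩,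
       ⟨nlbl (1, i, 2), .assert (condE fun ρ => ρ 0 = IVal.acc 1 ∨ ρ 0 = IVal.acc 2),
          nlbl (1, i, 4)⟩,
       ⟨nlbl (1, i, 4), .store (liftE ae) (liftE ve), nlbl (1, i, 5)⟩,
       ⟨nlbl (1, i, 5), .store (hbAddrE ae) (fun _ => .acc 2), clbl li.dst⟩]
  | .tas r ae ve =>
      [⟨olbl li.src, .load 0 (hbAddrE ae), nlbl (1, i, 2)⟩,
       ⟨nlbl (1, i, 2), .assert (condE fun ρ => ρ 0 = IVal.acc 1 ∨ ρ 0 = IVal.acc 2),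
          nlbl (1, i, 4)⟩,
       ⟨nlbl (1, i, 4), .tas (r + 2) (liftE ae) (liftE ve), nlbl (1, i, 5)⟩,
       ⟨nlbl (1, i, 5), .store (hbAddrE ae) (fun _ => .acc 2), clbl li.dst⟩]
  | _ => []

/-- The helpers' code copy (Equations (10)–(12)): loads and stores maintain
the maximal access type on the auxiliary happens-before addresses. -/
def helpCopy [Zero D] (i : ℕ) (li : LInstr Lbl D) : List (LInstr (ILbl Lbl) (IVal D)) :=
  match li.ins with
  | .store ae ve =>
      [⟨clbl li.src, .store (liftE ae) (liftE ve), nlbl (1, i, 6)⟩,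
       ⟨nlbl (1, i, 6), .store (hbAddrE ae) (fun _ => .acc 2), clbl li.dst⟩]
  | .load r ae =>
      [⟨clbl li.src, .assign 0 (liftE ae), nlbl (1, i, 7)⟩,
       ⟨nlbl (1, i, 7), .load (r + 2) (fun ρ => ρ 0), nlbl (1, i, 8)⟩,
       ⟨nlbl (1, i, 8), .load 1 (fun ρ => .hbAddr ((ρ 0).toD)), nlbl (1, i, 9)⟩,
       ⟨nlbl (1, i, 9), .store (fun ρ => .hbAddr ((ρ 0).toD))
          (fun ρ => if ρ 1 = IVal.acc 2 then IVal.acc 2 else IVal.acc 1), clbl li.dst⟩]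
  | .tas r ae ve =>
      [⟨clbl li.src, .tas (r + 2) (liftE ae) (liftE ve), nlbl (1, i, 10)⟩,
       ⟨nlbl (1, i, 10), .store (hbAddrE ae) (fun _ => .acc 2), clbl li.dst⟩]
  | ins => [⟨clbl li.src, liftInstr ins, clbl li.dst⟩]

/-- The success check (Equation (13)), added at every label of the code copy:
if the happens-before address of the address recorded in `a_st` has been
accessed, raise the success flag. -/
def sucCheck [Zero D] (l : Lbl) : List (LInstr (ILbl Lbl) (IVal D)) :=
  [⟨clbl l, .load 0 (fun _ => .aSt), slbl (l, 0)⟩,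
   ⟨slbl (l, 0), .load 1 (fun ρ => .hbAddr ((ρ 0).toD)), slbl (l, 1)⟩,
   ⟨slbl (l, 1), .assert (condE fun ρ => ρ 1 ≠ IVal.base 0), slbl (l, 2)⟩,
   ⟨slbl (l, 2), .store (fun _ => .sucFlag) truE, slbl (l, 3)⟩]

/-- The instrumented helper thread. -/
def helperThread [Zero D] (th : ThreadCode Lbl D) : ThreadCode (ILbl Lbl) (IVal D) :=
  ⟨th.nregs + 2, olbl th.init,
    (th.code.mapIdx fun i li =>
      helpGuard i li ++ helpMove i li ++ helpCopy i li ++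
      sucCheck li.src ++ sucCheck li.dst).flatten⟩

/-- The program `P_A`: `P` instrumented for the attack `A`. -/
def instrument [Zero D] (P : Program Tid Lbl D) (A : Attack Tid Lbl D) :
    Program Tid (ILbl Lbl) (IVal D) :=
  ⟨fun t => if t = A.attacker then attackerThread A.stinst A.ldinst (P.threads t)
            else helperThread (P.threads t)⟩

/-- SC reachability of a configuration satisfying `G`. -/
def ReachSC [Zero D] (P : Program Tid Lbl D) (G : Conf Tid Lbl D → Prop) : Prop :=
  ∃ ρ c, Run P ρ c ∧ SCshape (acts ρ) ∧ G c

/-- The instrumented program reaches a goal configuration (a configuration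
with `val(suc) = true`) under SC. -/
def ReachGoalSC {Lbl' : Type} [Zero D] (P' : Program Tid Lbl' (IVal D)) : Prop :=
  ReachSC P' fun c => c.mem .sucFlag = .tru

/-! ### Parameterized programs and the parameterized instrumentation -/

/-- The instance `P(I)` of a parameterized program `P` with threads
`t₁, …, t_k`: it declares `I i` identical copies of thread `t_i`. -/
def instProg {k : ℕ} (P : Program (Fin k) Lbl D) (I : Fin k → ℕ) :
    Program (Σ i : Fin k, Fin (I i)) Lbl D :=
  ⟨fun ti => P.threads ti.1⟩

/-- A parameterized program is robust if all its instances are robust. -/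
def ParamRobust {k : ℕ} [Zero D] (P : Program (Fin k) Lbl D) : Prop :=
  ∀ I : Fin k → ℕ, Robust (instProg P I)

/-- In the parameterized instrumentation, the attacker's move to the code copy
additionally performs an atomic test-and-set of a fresh flag variable, so that
at most one copy of the attacker thread delays stores. -/
def attMoveStoreTas [Zero D] (st : LInstr Lbl D) : List (LInstr (ILbl Lbl) (IVal D)) :=
  match st.ins with
  | .store ae ve =>
      [⟨olbl st.src, .tas 0 (fun _ => .attFlag) truE, nlbl (0, 0, 1)⟩,
       ⟨nlbl (0, 0, 1), .assert (condE fun ρ => ρ 0 = IVal.base 0), nlbl (0, 0, 2)⟩,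
       ⟨nlbl (0, 0, 2), .store (dAddrE ae) (dValE ve), nlbl (0, 0, 0)⟩,
       ⟨nlbl (0, 0, 0), .store (fun _ => .aSt) (liftE ae), clbl st.dst⟩]
  | _ => []

/-- The attacker thread of the parameterized instrumentation: instrumented
both as an attacker (with the test-and-set guarded move) and as a helper. -/
def pAttackerThread [Zero D] (st ld : LInstr Lbl D) (th : ThreadCode Lbl D) :
    ThreadCode (ILbl Lbl) (IVal D) :=
  ⟨th.nregs + 2, olbl th.init,
    (th.code.mapIdx fun i li =>
      helpGuard i li ++ helpMove i li ++ helpCopy i li ++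
      sucCheck li.src ++ sucCheck li.dst).flatten ++
    attMoveStoreTas st ++ attMoveLoad ld ++
    (th.code.mapIdx fun i li => attCopy i li).flatten⟩

/-- The parameterized instrumentation `P_A` of a parameterized program. -/
def pinstrument {k : ℕ} [Zero D] (P : Program (Fin k) Lbl D) (A : Attack (Fin k) Lbl D) :
    Program (Fin k) (ILbl Lbl) (IVal D) :=
  ⟨fun t => if t = A.attacker then pAttackerThread A.stinst A.ldinst (P.threads t)
            else helperThread (P.threads t)⟩
/-! ### Fence insertion -/

/-- Inserting fences at the labels in `F`: each instruction from a label
`l ∈ F` is moved to the fresh label `l_f` (encoded `Sum.inr l`), and an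
`mfence` instruction from `l` to `l_f` is added. -/
def insertFences (P : Program Tid Lbl D) (F : Finset Lbl) :
    Program Tid (Lbl ⊕ Lbl) D :=
  ⟨fun t =>
    ⟨(P.threads t).nregs, Sum.inl (P.threads t).init,
      ((P.threads t).code.map fun li =>
        ⟨if li.src ∈ F then Sum.inr li.src else Sum.inl li.src, li.ins, Sum.inl li.dst⟩) ++
      F.toList.map fun l => ⟨Sum.inl l, Instr.mfence, Sum.inr l⟩⟩⟩

/-- A valid fence set: inserting fences at its labels yields a robust program. -/
def ValidFenceSet [Zero D] (P : Program Tid Lbl D) (F : Finset Lbl) : Prop :=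
  Robust (insertFences P F)

/-- An irreducible valid fence set: no strict subset is valid. -/
def IrreducibleFenceSet [Zero D] (P : Program Tid Lbl D) (F : Finset Lbl) : Prop :=
  ValidFenceSet P F ∧ ∀ F' ⊂ F, ¬ ValidFenceSet P F'

/-- The labelled instruction of the fenced program corresponding to a labelled
instruction of `P`. -/
def mapLI (F : Finset Lbl) (li : LInstr Lbl D) : LInstr (Lbl ⊕ Lbl) D :=
  ⟨if li.src ∈ F then Sum.inr li.src else Sum.inl li.src, li.ins, Sum.inl li.dst⟩

/-- The attack of the fenced program corresponding to an attack of `P`. -/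
def mapAttack (F : Finset Lbl) (A : Attack Tid Lbl D) : Attack Tid (Lbl ⊕ Lbl) D :=
  ⟨A.attacker, mapLI F A.stinst, mapLI F A.ldinst⟩

/-- `F` eliminates the attack `A`: after inserting the fences of `F`, the
attack admits no TSO witness. -/
def EliminatesAttack [Zero D] (P : Program Tid Lbl D) (F : Finset Lbl)
    (A : Attack Tid Lbl D) : Prop :=
  ¬ ∃ τ, TSOWitness (insertFences P F) (mapAttack F A) τ

/-- An irreducible eliminating fence set for attack `A`. -/
def IrredElim [Zero D] (P : Program Tid Lbl D) (F : Finset Lbl)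
    (A : Attack Tid Lbl D) : Prop :=
  EliminatesAttack P F A ∧ ∀ F' ⊂ F, ¬ EliminatesAttack P F' A

/-- The (finitely many) labels occurring in the program. -/
def labelsOf [Fintype Tid] (P : Program Tid Lbl D) : Finset Lbl :=
  Finset.univ.biUnion fun t =>
    (((P.threads t).code.map LInstr.src) ++ ((P.threads t).code.map LInstr.dst) ++
      [(P.threads t).init]).toFinset

/-- The cost of a fence set. -/
def fenceCost (c : Lbl → ℝ) (F : Finset Lbl) : ℝ := ∑ l ∈ F, c l

/-- A feasible point of the 0/1-ILP of Section 6.2: a 0/1 (Boolean) variable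
`xF F` for every irreducible eliminating fence set `F` of every feasible
attack and a 0/1 variable `xl l` for every label `l`, such that for every
feasible attack `A` some irreducible eliminating fence set for `A` is selected
(`∑ᵢ x_{Fᵢ} ≥ 1`), and whenever a set is selected all its labels are selected
(`∑_{l ∈ Fᵢ} x_l ≥ |Fᵢ| · x_{Fᵢ}`). -/
def ILPFeasiblePoint [Zero D] (P : Program Tid Lbl D)
    (xF : Finset Lbl → Bool) (xl : Lbl → Bool) : Prop :=
  (∀ A : Attack Tid Lbl D, FeasibleAttack P A →
      ∃ F, IrredElim P F A ∧ xF F = true) ∧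
  (∀ (A : Attack Tid Lbl D) (F : Finset Lbl), FeasibleAttack P A → IrredElim P F A →
      xF F = true → ∀ l ∈ F, xl l = true)

/-- The objective function `f(x) = ∑_l c(l) · x_l` of the ILP. -/
def ILPCost [Fintype Tid] (P : Program Tid Lbl D) (c : Lbl → ℝ) (xl : Lbl → Bool) : ℝ :=
  ∑ l ∈ labelsOf P, if xl l then c l else 0

/-! ### Petri nets and the counter abstraction -/

/-- A Petri net, given by its weight functions `pre` and `post`. -/
structure PetriNet (S T : Type) : Type where
  pre : S → T → ℕ
  post : T → S → ℕ

/-- A transition is enabled in a marking. -/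
def PetriNet.enabled (N : PetriNet S T) (m : S → ℕ) (t : T) : Prop :=
  ∀ s, N.pre s t ≤ m s

/-- Firing a transition. -/
def PetriNet.fire (N : PetriNet S T) (m : S → ℕ) (t : T) : S → ℕ :=
  fun s => m s - N.pre s t + N.post t s

/-- Reachability of a marking by a firing sequence. -/
inductive PetriNet.Reach (N : PetriNet S T) : (S → ℕ) → (S → ℕ) → Prop where
  | refl (m : S → ℕ) : PetriNet.Reach N m m
  | step (m : S → ℕ) (t : T) (m' : S → ℕ) :
      N.enabled m t → PetriNet.Reach N (N.fire m t) m' → PetriNet.Reach N m m'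

/-- Coverability of a marking. -/
def PetriNet.Coverable (N : PetriNet S T) (m₀ m : S → ℕ) : Prop :=
  ∃ m', PetriNet.Reach N m₀ m' ∧ ∀ s, m s ≤ m' s

/-- Expressions evaluate identically on register valuations that agree on the
declared registers `0, …, n-1`. -/
def ExprOK (n : ℕ) (e : (ℕ → D) → D) : Prop :=
  ∀ ρ ρ' : ℕ → D, (∀ r < n, ρ r = ρ' r) → e ρ = e ρ'

/-- An instruction only uses the declared registers. -/
def InstrOK (n : ℕ) : Instr D → Prop
  | .load r ae => r < n ∧ ExprOK n ae
  | .store ae ve => ExprOK n ae ∧ ExprOK n ve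
  | .mfence => True
  | .assign r e => r < n ∧ ExprOK n e
  | .assert e => ExprOK n e
  | .tas r ae ve => r < n ∧ ExprOK n ae ∧ ExprOK n ve

/-- All threads only use their declared registers. -/
def RegsBounded (P : Program Tid Lbl D) : Prop :=
  ∀ t, ∀ li ∈ (P.threads t).code, InstrOK (P.threads t).nregs li.ins

/-- Extension of a valuation of the declared registers by `0`. -/
def extV [Zero D] (n : ℕ) (vs : Fin n → D) : ℕ → D :=
  fun r => if h : r < n then vs ⟨r, h⟩ else 0

/-- Update of a valuation of the declared registers. -/
def updV {n : ℕ} (vs : Fin n → D) (r : ℕ) (v : D) : Fin n → D :=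
  fun q => if (q : ℕ) = r then v else vs q

section PN

variable {k : ℕ} (P : Program (Fin k) Lbl D)

/-- Places of the counter-abstraction Petri net: a place `p_{a,v}` for every
address `a` and value `v` (representing `val(a) = v`), and a place
`p_{i,l,v̄}` for every thread `i`, label `l` and valuation `v̄` of the declared
registers (counting the instances of thread `i` at control state `l` with
registers `v̄`). -/
def PNPlace : Type :=
  (D × D) ⊕ (Σ i : Fin k, Lbl × (Fin ((P.threads i).nregs) → D))

/-- Raw transitions: a spawn transition for every thread, and a transition for
every thread, instruction (index) and relevant valuation/value combination. -/
def PNTransRaw : Type :=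
  (Fin k) ⊕ (Σ i : Fin k, ℕ × ((Fin ((P.threads i).nregs) → D) × D))

variable [Zero D]

/-- Guard: the indexed instruction exists, and asserts only fire when their
condition evaluates to a nonzero value. -/
def PNGuard : PNTransRaw P → Prop
  | .inl _ => True
  | .inr ⟨i, j, vs, _⟩ =>
      match ((P.threads i).code)[j]? with
      | some li =>
          match li.ins with
          | .assert e => e (extV ((P.threads i).nregs) vs) ≠ 0
          | _ => True
      | none => False

def PNTrans : Type := {x : PNTransRaw P // PNGuard P x}

/-- The weight function `W(s, t)`. -/
def PNpre : PNPlace P → PNTrans P → ℕ := fun s t =>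
  match t.1 with
  | .inl _ => 0
  | .inr ⟨i, j, vs, v⟩ =>
      match ((P.threads i).code)[j]? with
      | none => 0
      | some li =>
          (if s = Sum.inr ⟨i, (li.src, vs)⟩ then 1 else 0) +
          (let ext := extV ((P.threads i).nregs) vs
           match li.ins with
           | .load _ ae => if s = Sum.inl (ae ext, v) then 1 else 0
           | .store ae _ => if s = Sum.inl (ae ext, v) then 1 else 0
           | .tas _ ae _ => if s = Sum.inl (ae ext, v) then 1 else 0
           | _ => 0)

/-- The weight function `W(t, s)`. -/
def PNpost : PNTrans P → PNPlace P → ℕ := fun t s =>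
  match t.1 with
  | .inl i => if s = Sum.inr ⟨i, ((P.threads i).init, fun _ => (0 : D))⟩ then 1 else 0
  | .inr ⟨i, j, vs, v⟩ =>
      match ((P.threads i).code)[j]? with
      | none => 0
      | some li =>
          let ext := extV ((P.threads i).nregs) vs
          match li.ins with
          | .load r ae =>
              (if s = Sum.inr ⟨i, (li.dst, updV vs r v)⟩ then 1 else 0) +
              (if s = Sum.inl (ae ext, v) then 1 else 0)
          | .store ae ve =>
              (if s = Sum.inr ⟨i, (li.dst, vs)⟩ then 1 else 0) +
              (if s = Sum.inl (ae ext, ve ext) then 1 else 0)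
          | .mfence => if s = Sum.inr ⟨i, (li.dst, vs)⟩ then 1 else 0
          | .assign r e => if s = Sum.inr ⟨i, (li.dst, updV vs r (e ext))⟩ then 1 else 0
          | .assert _ => if s = Sum.inr ⟨i, (li.dst, vs)⟩ then 1 else 0
          | .tas r ae ve =>
              (if s = Sum.inr ⟨i, (li.dst, updV vs r v)⟩ then 1 else 0) +
              (if s = Sum.inl (ae ext, ve ext) then 1 else 0)

/-- The counter-abstraction Petri net of a parameterized program. -/
def PNnet : PetriNet (PNPlace P) (PNTrans P) := ⟨PNpre P, PNpost P⟩

/-- The initial marking: one token on `p_{a,0}` for every address `a`. -/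
def PNm0 : PNPlace P → ℕ := fun s =>
  match s with
  | .inl (_, v) => if v = 0 then 1 else 0
  | .inr _ => 0

/-- The marking to be covered: one token on `p_{suc,true}`. -/
def PNmsuc (aSuc vTrue : D) : PNPlace P → ℕ := fun s =>
  if s = Sum.inl (aSuc, vTrue) then 1 else 0

end PN

/-! ### Auxiliary lemmas for Statement 6 -/

section Aux

/-- Generic list lemma: the element at `q` satisfying `f` appears in the filtered
list at index `((l.take q).filter f).length`, and the prefix matches. -/
lemma filter_take_getElem {α : Type _} {l : List α} {f : α → Bool} {q : ℕ} {x : α}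
    (hq : l[q]? = some x) (hf : f x = true) :
    (l.filter f).take ((l.take q).filter f).length = (l.take q).filter f ∧
    (l.filter f)[((l.take q).filter f).length]? = some x := by
  obtain ⟨hlt, hx⟩ := List.getElem?_eq_some_iff.mp hq
  have hdec : l = l.take q ++ (x :: l.drop (q + 1)) := by
    conv_lhs => rw [← List.take_append_drop q l, List.drop_eq_getElem_cons hlt, hx]
  have hfil : l.filter f = (l.take q).filter f ++ (x :: l.drop (q + 1)).filter f := by
    conv_lhs => rw [hdec]
    rw [List.filter_append]
  constructor
  · rw [hfil]
    exact List.take_left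
  · rw [hfil, List.getElem?_append_right le_rfl]
    simp [List.filter_cons, hf]

/-- Converse: an element of the filtered list comes from a position in `l`. -/
lemma filter_getElem_pos {α : Type _} {f : α → Bool} :
    ∀ (l : List α) (r : ℕ) (x : α), (l.filter f)[r]? = some x →
      ∃ q, l[q]? = some x ∧ f x = true ∧ ((l.take q).filter f).length = r := by
  intro l
  induction l with
  | nil => intro r x h; simp at h
  | cons a l ih =>
    intro r x h
    by_cases hfa : f a = true
    · rw [List.filter_cons_of_pos hfa] at h
      cases r with
      | zero =>
        simp at h; subst h
        exact ⟨0, by simp, hfa, by simp⟩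
      | succ r =>
        simp only [List.getElem?_cons_succ] at h
        obtain ⟨q, hq, hfx, hcnt⟩ := ih r x h
        exact ⟨q + 1, by simpa using hq, hfx, by
          simp [List.take_succ_cons, List.filter_cons_of_pos hfa, hcnt]⟩
    · rw [List.filter_cons_of_neg hfa] at h
      obtain ⟨q, hq, hfx, hcnt⟩ := ih r x h
      exact ⟨q + 1, by simpa using hq, hfx, by
        simp [List.take_succ_cons, List.filter_cons_of_neg hfa, hcnt]⟩

variable {Tid D : Type}

lemma cntP_mono (τ : List (Act Tid D)) (p : Act Tid D → Prop) {i j : ℕ} (h : i ≤ j) :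
    cntP τ p i ≤ cntP τ p j := by
  unfold cntP
  have h1 : τ.take i = (τ.take j).take i := by rw [List.take_take, Nat.min_eq_left h]
  rw [h1]
  exact ((List.take_sublist _ _).filter _).length_le

lemma cntP_succ_sat {τ : List (Act Tid D)} {p : Act Tid D → Prop} {i : ℕ} {a : Act Tid D}
    (hi : τ[i]? = some a) (hp : p a) : cntP τ p (i + 1) = cntP τ p i + 1 := by
  unfold cntP
  rw [List.take_succ, hi, List.filter_append]
  simp [hp]

lemma cntP_succ_not {τ : List (Act Tid D)} {p : Act Tid D → Prop} {i : ℕ}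
    (h : ∀ a, τ[i]? = some a → ¬ p a) : cntP τ p (i + 1) = cntP τ p i := by
  unfold cntP
  rw [List.take_succ, List.filter_append]
  rcases hi : τ[i]? with _ | a
  · simp
  · simp [h a hi]

lemma cntP_lt {τ : List (Act Tid D)} {p : Act Tid D → Prop} {i j : ℕ} {a : Act Tid D}
    (hi : τ[i]? = some a) (hp : p a) (hij : i < j) : cntP τ p i < cntP τ p j := by
  have h1 : cntP τ p i < cntP τ p (i + 1) := by rw [cntP_succ_sat hi hp]; omega
  exact h1.trans_le (cntP_mono τ p hij)


lemma range_filter_getElem {f : ℕ → Bool} {n q k : ℕ} (hq : q < n) (hfq : f q = true)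
    (hk : ((List.range q).filter f).length = k) :
    ((List.range n).filter f)[k]? = some q := by
  have h1 := (filter_take_getElem (l := List.range n) (f := f)
      (List.getElem?_range hq) hfq).2
  rw [List.take_range, show q ⊓ n = q from Nat.min_eq_left hq.le, hk] at h1
  exact h1

lemma range_filter_cntP {τ : List (Act Tid D)} {p : Act Tid D → Prop} {f : ℕ → Bool}
    (hf : ∀ i a, τ[i]? = some a → (f i = true ↔ p a)) :
    ∀ q, q ≤ τ.length → ((List.range q).filter f).length = cntP τ p q := by
  intro q
  induction q with
  | zero => intro _; simp [cntP]
  | succ q ih =>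
    intro hq
    have hq' : q < τ.length := hq
    obtain ⟨a, ha⟩ : ∃ a, τ[q]? = some a := ⟨τ[q], List.getElem?_eq_getElem hq'⟩
    rw [List.range_succ, List.filter_append]
    by_cases hp : p a
    · rw [cntP_succ_sat ha hp]
      have hfq : f q = true := (hf q a ha).mpr hp
      simp [hfq, ih (le_of_lt hq')]
    · rw [cntP_succ_not (fun b hb => by rw [ha] at hb; cases hb; exact hp)]
      have hfq : f q = false := by
        rcases Bool.eq_false_or_eq_true (f q) with h | h
        · exact absurd ((hf q a ha).mp h) hp
        · exact h
      simp [hfq, ih (le_of_lt hq')]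

/-- If the action at `q` satisfies `p` and there are `k` earlier such actions,
then `posOfNth` returns `q`. -/
lemma posOfNth_eq {τ : List (Act Tid D)} {p : Act Tid D → Prop} {q k : ℕ} {x : Act Tid D}
    (hq : τ[q]? = some x) (hp : p x) (hk : cntP τ p q = k) :
    posOfNth τ p k = some q := by
  have hlt : q < τ.length := (List.getElem?_eq_some_iff.mp hq).1
  unfold posOfNth
  apply range_filter_getElem hlt
  · simp only [decide_eq_true_eq]; exact ⟨x, hq, hp⟩
  · refine (range_filter_cntP ?_ q hlt.le).trans hk
    intro i a hia
    simp only [decide_eq_true_eq]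
    constructor
    · rintro ⟨a', ha', hp'⟩; rw [hia] at ha'; cases ha'; exact hp'
    · intro h; exact ⟨a, hia, h⟩

lemma cntP_prefix (l₁ l₂ : List (Act Tid D)) (p : Act Tid D → Prop) {j : ℕ}
    (h : j ≤ l₁.length) : cntP (l₁ ++ l₂) p j = cntP l₁ p j := by
  unfold cntP
  rw [List.take_append_of_le_length h]

lemma cntP_append (l₁ l₂ : List (Act Tid D)) (p : Act Tid D → Prop) (k : ℕ) :
    cntP (l₁ ++ l₂) p (l₁.length + k) = cntP l₁ p l₁.length + cntP l₂ p k := by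
  unfold cntP
  rw [List.take_append, List.filter_append, List.length_append, List.take_length]
  rw [Nat.add_sub_cancel_left, List.take_of_length_le (by omega)]


/-! #### Boolean action predicates -/

def nsb : Act Tid D → Bool
  | .store _ _ _ => false
  | _ => true

def isb : Act Tid D → Bool
  | .issue _ => true
  | _ => false

lemma nsb_iff (a : Act Tid D) : nsb a = true ↔ ¬ a.isStore := by
  cases a <;> simp [nsb, Act.isStore]

lemma isb_iff (a : Act Tid D) : isb a = true ↔ a.isIssue := by
  cases a <;> simp [isb, Act.isIssue]

lemma cntP_filter_eq {τ : List (Act Tid D)} {p : Act Tid D → Prop} {f : Act Tid D → Bool}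
    (hf : ∀ a, f a = true ↔ p a) (q : ℕ) :
    ((τ.take q).filter f).length = cntP τ p q := by
  unfold cntP
  congr 1
  apply List.filter_congr
  intro x _
  rw [Bool.eq_iff_iff]
  simp only [decide_eq_true_eq, hf]

/-! #### `mergeStores` indexing -/

lemma msGet_nonissue :
    ∀ (l s : List (Act Tid D)) (r : ℕ) (x : Act Tid D),
      (l.filter nsb)[r]? = some x → ¬ x.isIssue → (mergeStores l s)[r]? = some x := by
  intro l
  induction l with
  | nil => intro s r x h _; simp at h
  | cons a l ih =>
    intro s r x h hx
    cases a with
    | store t av v =>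
      rw [List.filter_cons_of_neg (by simp [nsb])] at h
      simpa [mergeStores] using ih s r x h hx
    | issue t =>
      rw [List.filter_cons_of_pos (by simp [nsb])] at h
      cases r with
      | zero => simp at h; subst h; exact absurd trivial hx
      | succ r =>
        simp only [List.getElem?_cons_succ] at h
        simpa [mergeStores] using ih s.tail r x h hx
    | load t av v =>
      rw [List.filter_cons_of_pos (by simp [nsb])] at h
      cases r with
      | zero => simp at h; subst h; simp [mergeStores]
      | succ r =>
        simp only [List.getElem?_cons_succ] at h
        simpa [mergeStores] using ih s r x h hx
    | loc t =>
      rw [List.filter_cons_of_pos (by simp [nsb])] at h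
      cases r with
      | zero => simp at h; subst h; simp [mergeStores]
      | succ r =>
        simp only [List.getElem?_cons_succ] at h
        simpa [mergeStores] using ih s r x h hx

lemma msGet_issue :
    ∀ (l s : List (Act Tid D)) (r k : ℕ) (t : Tid),
      (l.filter nsb)[r]? = some (.issue t) →
      (((l.filter nsb).take r).filter isb).length = k → k < s.length →
      (mergeStores l s)[r]? = s[k]? := by
  intro l
  induction l with
  | nil => intro s r k t h _ _; simp at h
  | cons a l ih =>
    intro s r k t h hk hks
    cases a with
    | store t' av v =>
      rw [List.filter_cons_of_neg (by simp [nsb])] at h hk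
      simpa [mergeStores] using ih s r k t h hk hks
    | issue t' =>
      rw [List.filter_cons_of_pos (by simp [nsb])] at h hk
      cases r with
      | zero =>
        simp at h hk
        subst hk
        cases s with
        | nil => simp at hks
        | cons b s' => simp [mergeStores]
      | succ r =>
        simp only [List.getElem?_cons_succ] at h
        rw [List.take_succ_cons, List.filter_cons_of_pos (by simp [isb])] at hk
        simp only [List.length_cons] at hk
        cases s with
        | nil => simp at hks
        | cons b s' =>
          cases k with
          | zero => omega
          | succ k =>
            simp only [List.getElem?_cons_succ]
            simpa [mergeStores] using ih s' r k t h (by omega) (by simpa using hks)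
    | load t' av v =>
      rw [List.filter_cons_of_pos (by simp [nsb])] at h hk
      cases r with
      | zero => simp at h
      | succ r =>
        simp only [List.getElem?_cons_succ] at h
        rw [List.take_succ_cons, List.filter_cons_of_neg (by simp [isb])] at hk
        simpa [mergeStores] using ih s r k t h hk hks
    | loc t' =>
      rw [List.filter_cons_of_pos (by simp [nsb])] at h hk
      cases r with
      | zero => simp at h
      | succ r =>
        simp only [List.getElem?_cons_succ] at h
        rw [List.take_succ_cons, List.filter_cons_of_neg (by simp [isb])] at hk
        simpa [mergeStores] using ih s r k t h hk hks

lemma msGet_rev :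
    ∀ (l s : List (Act Tid D)) (r : ℕ) (x : Act Tid D),
      (mergeStores l s)[r]? = some x →
      ∃ y, (l.filter nsb)[r]? = some y ∧
        (y = x ∨ (y.isIssue ∧
          s[(((l.filter nsb).take r).filter isb).length]? = some x)) := by
  intro l
  induction l with
  | nil => intro s r x h; simp [mergeStores] at h
  | cons a l ih =>
    intro s r x h
    cases a with
    | store t' av v =>
      rw [show mergeStores (Act.store t' av v :: l) s = mergeStores l s from rfl] at h
      obtain ⟨y, hy, hc⟩ := ih s r x h
      refine ⟨y, ?_, hc⟩
      rw [List.filter_cons_of_neg (by simp [nsb])]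
      exact hy
    | issue t' =>
      rw [show mergeStores (Act.issue t' :: l) s
          = s.headD (.issue t') :: mergeStores l s.tail from rfl] at h
      cases r with
      | zero =>
        simp only [List.getElem?_cons_zero, Option.some.injEq] at h
        refine ⟨.issue t', ?_, ?_⟩
        · rw [List.filter_cons_of_pos (by simp [nsb])]; simp
        · cases s with
          | nil => left; simpa using h
          | cons b s' =>
            right
            refine ⟨trivial, ?_⟩
            rw [List.filter_cons_of_pos (by simp [nsb])]
            simpa using h
      | succ r =>
        simp only [List.getElem?_cons_succ] at h
        obtain ⟨y, hy, hc⟩ := ih s.tail r x h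
        refine ⟨y, ?_, ?_⟩
        · rw [List.filter_cons_of_pos (by simp [nsb])]
          simpa using hy
        · rcases hc with hc | ⟨hyi, hs⟩
          · exact Or.inl hc
          · right
            refine ⟨hyi, ?_⟩
            rw [List.filter_cons_of_pos (by simp [nsb]), List.take_succ_cons,
              List.filter_cons_of_pos (by simp [isb])]
            simp only [List.length_cons]
            cases s with
            | nil => simpa using hs
            | cons b s' => simpa using hs
    | load t' av v =>
      rw [show mergeStores (Act.load t' av v :: l) s
          = .load t' av v :: mergeStores l s from rfl] at h
      cases r with
      | zero =>
        simp only [List.getElem?_cons_zero, Option.some.injEq] at h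
        refine ⟨.load t' av v, ?_, Or.inl h⟩
        rw [List.filter_cons_of_pos (by simp [nsb])]; simp
      | succ r =>
        simp only [List.getElem?_cons_succ] at h
        obtain ⟨y, hy, hc⟩ := ih s r x h
        refine ⟨y, ?_, ?_⟩
        · rw [List.filter_cons_of_pos (by simp [nsb])]
          simpa using hy
        · rcases hc with hc | ⟨hyi, hs⟩
          · exact Or.inl hc
          · right
            refine ⟨hyi, ?_⟩
            rw [List.filter_cons_of_pos (by simp [nsb]), List.take_succ_cons,
              List.filter_cons_of_neg (by simp [isb])]
            exact hs
    | loc t' =>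
      rw [show mergeStores (Act.loc t' :: l) s
          = .loc t' :: mergeStores l s from rfl] at h
      cases r with
      | zero =>
        simp only [List.getElem?_cons_zero, Option.some.injEq] at h
        refine ⟨.loc t', ?_, Or.inl h⟩
        rw [List.filter_cons_of_pos (by simp [nsb])]; simp
      | succ r =>
        simp only [List.getElem?_cons_succ] at h
        obtain ⟨y, hy, hc⟩ := ih s r x h
        refine ⟨y, ?_, ?_⟩
        · rw [List.filter_cons_of_pos (by simp [nsb])]
          simpa using hy
        · rcases hc with hc | ⟨hyi, hs⟩
          · exact Or.inl hc
          · right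
            refine ⟨hyi, ?_⟩
            rw [List.filter_cons_of_pos (by simp [nsb]), List.take_succ_cons,
              List.filter_cons_of_neg (by simp [isb])]
            exact hs

lemma mergeStores_length :
    ∀ (l s : List (Act Tid D)), (mergeStores l s).length = (l.filter nsb).length := by
  intro l
  induction l with
  | nil => intro s; simp [mergeStores]
  | cons a l ih =>
    intro s
    cases a with
    | store t' av v =>
      rw [List.filter_cons_of_neg (by simp [nsb])]
      exact ih s
    | issue t' =>
      rw [List.filter_cons_of_pos (by simp [nsb])]
      simpa [mergeStores] using ih s.tail
    | load t' av v =>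
      rw [List.filter_cons_of_pos (by simp [nsb])]
      simpa [mergeStores] using ih s
    | loc t' =>
      rw [List.filter_cons_of_pos (by simp [nsb])]
      simpa [mergeStores] using ih s


lemma cntP_zero (τ : List (Act Tid D)) (p : Act Tid D → Prop) : cntP τ p 0 = 0 := by
  simp [cntP]

lemma cntP_cons (x : Act Tid D) (l : List (Act Tid D)) (p : Act Tid D → Prop) (i : ℕ) :
    cntP (x :: l) p (i + 1) = (if p x then 1 else 0) + cntP l p i := by
  unfold cntP
  rw [List.take_succ_cons, List.filter_cons]
  by_cases hp : p x
  · simp [hp]; omega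
  · simp [hp]

/-! #### Counting invariants of runs -/

lemma step_balance [Zero D] {P : Program Tid Lbl D} {c c₂ : Conf Tid Lbl D}
    {ρ₁ : List (Ev Tid Lbl D)} (h : Step P c ρ₁ c₂) (t : Tid) :
    cntP (acts ρ₁) (isStoreOf t) (acts ρ₁).length + (c₂.buf t).length
      = cntP (acts ρ₁) (isIssueOf t) (acts ρ₁).length + (c.buf t).length := by
  cases h with
  | loadBuf t' li r ae a v h1 h2 h3 h4 h5 =>
    simp [acts, cntP_cons, cntP_zero, isStoreOf, isIssueOf, Act.isStore, Act.isIssue]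
  | loadMem t' li r ae a v h1 h2 h3 h4 h5 h6 =>
    simp [acts, cntP_cons, cntP_zero, isStoreOf, isIssueOf, Act.isStore, Act.isIssue]
  | storeIssue t' li ae ve a v h1 h2 h3 h4 h5 =>
    by_cases ht : t = t'
    · subst ht
      simp [acts, cntP_cons, cntP_zero, isStoreOf, isIssueOf, Act.isStore, Act.isIssue,
        Act.thread, updf]
      omega
    · simp [acts, cntP_cons, cntP_zero, isStoreOf, isIssueOf, Act.isStore, Act.isIssue,
        Act.thread, updf, ht]
      exact fun h => ht h.symm
  | flush t' a v β hb =>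
    by_cases ht : t = t'
    · subst ht
      simp [acts, cntP_cons, cntP_zero, isStoreOf, isIssueOf, Act.isStore, Act.isIssue,
        Act.thread, updf, hb]
      omega
    · simp [acts, cntP_cons, cntP_zero, isStoreOf, isIssueOf, Act.isStore, Act.isIssue,
        Act.thread, updf, ht]
      exact fun h => ht h.symm
  | fence t' li h1 h2 h3 h4 =>
    simp [acts, cntP_cons, cntP_zero, isStoreOf, isIssueOf, Act.isStore, Act.isIssue]
  | assign t' li r e h1 h2 h3 =>
    simp [acts, cntP_cons, cntP_zero, isStoreOf, isIssueOf, Act.isStore, Act.isIssue]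
  | assert t' li e h1 h2 h3 h4 =>
    simp [acts, cntP_cons, cntP_zero, isStoreOf, isIssueOf, Act.isStore, Act.isIssue]
  | tas t' li r ae ve a vold vnew h1 h2 h3 h4 h5 h6 h7 =>
    by_cases ht : t = t'
    · subst ht
      simp [acts, cntP_cons, cntP_zero, isStoreOf, isIssueOf, Act.isStore, Act.isIssue,
        Act.thread]
    · simp [acts, cntP_cons, cntP_zero, isStoreOf, isIssueOf, Act.isStore, Act.isIssue,
        Act.thread, ht]

lemma step_store_lt [Zero D] {P : Program Tid Lbl D} {c c₂ : Conf Tid Lbl D}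
    {ρ₁ : List (Ev Tid Lbl D)} (h : Step P c ρ₁ c₂) :
    ∀ t j a v, (acts ρ₁)[j]? = some (.store t a v) →
      cntP (acts ρ₁) (isStoreOf t) j < cntP (acts ρ₁) (isIssueOf t) j + (c.buf t).length := by
  cases h with
  | loadBuf t' li r ae a v h1 h2 h3 h4 h5 =>
    intro t j a' v' hj
    rcases j with _ | j <;> simp [acts] at hj
  | loadMem t' li r ae a v h1 h2 h3 h4 h5 h6 =>
    intro t j a' v' hj
    rcases j with _ | j <;> simp [acts] at hj
  | storeIssue t' li ae ve a v h1 h2 h3 h4 h5 =>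
    intro t j a' v' hj
    rcases j with _ | j <;> simp [acts] at hj
  | flush t' a v β hb =>
    intro t j a' v' hj
    rcases j with _ | j
    · simp [acts] at hj
      obtain ⟨ht, -, -⟩ := hj
      subst ht
      rw [cntP_zero, cntP_zero, hb]
      simp
    · simp [acts] at hj
  | fence t' li h1 h2 h3 h4 =>
    intro t j a' v' hj
    rcases j with _ | j <;> simp [acts] at hj
  | assign t' li r e h1 h2 h3 =>
    intro t j a' v' hj
    rcases j with _ | j <;> simp [acts] at hj
  | assert t' li e h1 h2 h3 h4 =>
    intro t j a' v' hj
    rcases j with _ | j <;> simp [acts] at hj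
  | tas t' li r ae ve a vold vnew h1 h2 h3 h4 h5 h6 h7 =>
    intro t j a' v' hj
    rcases j with _ | _ | _ | j
    · simp [acts] at hj
    · simp [acts] at hj
    · simp [acts] at hj
      obtain ⟨ht, -, -⟩ := hj
      subst ht
      simp [acts, cntP_cons, cntP_zero, isStoreOf, isIssueOf, Act.isStore,
        Act.isIssue, Act.thread]
    · simp [acts] at hj

lemma steps_store_lt [Zero D] {P : Program Tid Lbl D} {c c' : Conf Tid Lbl D}
    {ρ : List (Ev Tid Lbl D)} (h : Steps P c ρ c') :
    ∀ t j a v, (acts ρ)[j]? = some (.store t a v) →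
      cntP (acts ρ) (isStoreOf t) j < cntP (acts ρ) (isIssueOf t) j + (c.buf t).length := by
  induction h with
  | refl c => intro t j a v h; simp [acts] at h
  | trans c₁ ρ₁ c₂ ρ₂ c₃ hstep hsteps ih =>
    intro t j a v hj
    have hacts : acts (ρ₁ ++ ρ₂) = acts ρ₁ ++ acts ρ₂ := by simp [acts]
    rw [hacts] at hj ⊢
    by_cases hlt : j < (acts ρ₁).length
    · rw [List.getElem?_append, if_pos hlt] at hj
      rw [cntP_prefix _ _ _ hlt.le, cntP_prefix _ _ _ hlt.le]
      exact step_store_lt hstep t j a v hj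
    · push_neg at hlt
      rw [List.getElem?_append_right hlt] at hj
      have hk := ih t (j - (acts ρ₁).length) a v hj
      have hbal := step_balance hstep t
      rw [show j = (acts ρ₁).length + (j - (acts ρ₁).length) from by omega,
        cntP_append, cntP_append]
      omega

/-- Per-thread store/issue balance of a computation. -/
def StoreBal (τ : List (Act Tid D)) : Prop :=
  ∀ t j a v, τ[j]? = some (.store t a v) →
    cntP τ (isStoreOf t) j < cntP τ (isIssueOf t) j

lemma run_storeBal [Zero D] {P : Program Tid Lbl D} {ρ : List (Ev Tid Lbl D)}
    {c : Conf Tid Lbl D} (h : Run P ρ c) : StoreBal (acts ρ) := by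
  intro t j a v hj
  have := steps_store_lt h t j a v hj
  simpa [initConf] using this


/-! #### SC-shape structure: stores immediately follow their issues -/

lemma sc_count {τ : List (Act Tid D)} (hS : SCshape τ) :
    ∀ q t, cntP τ (isIssueOf t) q ≤ cntP τ (isStoreOf t) q +
      (if ∃ i, q = i + 1 ∧ τ[i]? = some (Act.issue t) then 1 else 0) := by
  intro q
  induction q with
  | zero => intro t; simp [cntP_zero]
  | succ q ih =>
    intro t
    have noprev : (∀ a' v', τ[q]? ≠ some (Act.store t a' v')) →
        cntP τ (isIssueOf t) q ≤ cntP τ (isStoreOf t) q := by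
      intro hnb
      have := ih t
      rcases Classical.em (∃ i, q = i + 1 ∧ τ[i]? = some (Act.issue t)) with ⟨i, hqi, hi⟩ | hn
      · obtain ⟨a', v', hst⟩ := hS i t hi
        rw [← hqi] at hst
        exact absurd hst (hnb a' v')
      · rw [if_neg hn] at this; simpa using this
    rcases hq : τ[q]? with _ | a
    · rw [cntP_succ_not (p := isIssueOf t) (fun b hb => by rw [hq] at hb; cases hb),
        cntP_succ_not (p := isStoreOf t) (fun b hb => by rw [hq] at hb; cases hb)]
      have h0 := noprev (fun a' v' hb => by rw [hq] at hb; cases hb)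
      omega
    · cases a with
      | issue t0 =>
        by_cases ht : t0 = t
        · subst ht
          rw [cntP_succ_sat hq ⟨trivial, rfl⟩,
            cntP_succ_not (p := isStoreOf t0)
              (fun b hb => by rw [hq] at hb; cases hb; exact fun h => h.1)]
          rw [if_pos ⟨q, rfl, hq⟩]
          have h0 := noprev (fun a' v' hb => by rw [hq] at hb; simp at hb)
          omega
        · rw [cntP_succ_not (p := isIssueOf t)
              (fun b hb => by rw [hq] at hb; cases hb; exact fun h => ht h.2),
            cntP_succ_not (p := isStoreOf t)
              (fun b hb => by rw [hq] at hb; cases hb; exact fun h => h.1)]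
          have h0 := noprev (fun a' v' hb => by rw [hq] at hb; simp at hb)
          omega
      | store t0 av v =>
        rw [cntP_succ_not (p := isIssueOf t)
            (fun b hb => by rw [hq] at hb; cases hb; exact fun h => h.1)]
        have hind : cntP τ (isIssueOf t) q ≤ cntP τ (isStoreOf t) (q + 1) := by
          rcases Classical.em (∃ i, q = i + 1 ∧ τ[i]? = some (Act.issue t)) with ⟨i, hqi, hi⟩ | hn
          · obtain ⟨a', v', hst⟩ := hS i t hi
            rw [← hqi, hq] at hst
            cases hst
            rw [cntP_succ_sat hq ⟨trivial, rfl⟩]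
            have := ih t
            rw [if_pos ⟨i, hqi, hi⟩] at this
            omega
          · have := ih t
            rw [if_neg hn] at this
            have hmono : cntP τ (isStoreOf t) q ≤ cntP τ (isStoreOf t) (q + 1) :=
              cntP_mono τ _ (by omega)
            omega
        have hcond : ¬ ∃ i, q + 1 = i + 1 ∧ τ[i]? = some (Act.issue t) := by
          rintro ⟨i, hqi, hi⟩
          have : i = q := by omega
          subst this
          rw [hq] at hi; cases hi
        rw [if_neg hcond]
        omega
      | load t0 av v =>
        rw [cntP_succ_not (p := isIssueOf t)
            (fun b hb => by rw [hq] at hb; cases hb; exact fun h => h.1),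
          cntP_succ_not (p := isStoreOf t)
            (fun b hb => by rw [hq] at hb; cases hb; exact fun h => h.1)]
        have h0 := noprev (fun a' v' hb => by rw [hq] at hb; simp at hb)
        omega
      | loc t0 =>
        rw [cntP_succ_not (p := isIssueOf t)
            (fun b hb => by rw [hq] at hb; cases hb; exact fun h => h.1),
          cntP_succ_not (p := isStoreOf t)
            (fun b hb => by rw [hq] at hb; cases hb; exact fun h => h.1)]
        have h0 := noprev (fun a' v' hb => by rw [hq] at hb; simp at hb)
        omega

lemma sc_store_struct {τ : List (Act Tid D)} (hB : StoreBal τ) (hS : SCshape τ)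
    {j : ℕ} {t : Tid} {a v : D} (hj : τ[j]? = some (.store t a v)) :
    ∃ i, j = i + 1 ∧ τ[i]? = some (.issue t) ∧
      cntP τ (isIssueOf t) i = cntP τ (isStoreOf t) j ∧
      issueOfStore τ j = some i := by
  have hlt := hB t j a v hj
  have hle := sc_count hS j t
  have hcond : ∃ i, j = i + 1 ∧ τ[i]? = some (Act.issue t) := by
    by_contra hn
    rw [if_neg hn] at hle
    omega
  obtain ⟨i, hji, hi⟩ := hcond
  rw [if_pos ⟨i, hji, hi⟩] at hle
  have hIeq : cntP τ (isIssueOf t) j = cntP τ (isStoreOf t) j + 1 := by omega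
  have hIi : cntP τ (isIssueOf t) i + 1 = cntP τ (isIssueOf t) j := by
    rw [hji, cntP_succ_sat hi ⟨trivial, rfl⟩]
  refine ⟨i, hji, hi, by omega, ?_⟩
  have hpos : posOfNth τ (isIssueOf t) (cntP τ (isStoreOf t) j) = some i :=
    posOfNth_eq hi ⟨trivial, rfl⟩ (by omega)
  simp only [issueOfStore, hj]
  exact hpos

lemma sc_storeOfIssue {τ : List (Act Tid D)} (hB : StoreBal τ) (hS : SCshape τ)
    {i : ℕ} {t : Tid} (hi : τ[i]? = some (.issue t)) :
    ∃ a v, τ[i + 1]? = some (.store t a v) ∧ storeOfIssue τ i = some (i + 1) := by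
  obtain ⟨a, v, hst⟩ := hS i t hi
  obtain ⟨i', hii', hi', hcnt, _⟩ := sc_store_struct hB hS hst
  have : i' = i := by omega
  subst this
  refine ⟨a, v, hst, ?_⟩
  simp only [storeOfIssue, hi]
  exact posOfNth_eq hst ⟨trivial, rfl⟩ hcnt.symm

/-! #### Node positions -/

lemma rankAt_eq {τ : List (Act Tid D)} {q : ℕ} {a : Act Tid D} (hq : τ[q]? = some a) :
    rankAt τ q = cntP τ (fun x => x.thread = a.thread ∧ ¬ x.isStore) q := by
  unfold rankAt
  rw [hq]

lemma nodeAt_nonstore {τ : List (Act Tid D)} {q : ℕ} {a : Act Tid D}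
    (hq : τ[q]? = some a) (ha : ¬ a.isStore) :
    nodeAt τ q = some (a.thread, rankAt τ q) := by
  cases a with
  | store t av v => exact absurd trivial ha
  | issue t => simp only [nodeAt, hq, Act.thread]
  | load t av v => simp only [nodeAt, hq, Act.thread]
  | loc t => simp only [nodeAt, hq, Act.thread]

lemma nodeAt_store_sc {τ : List (Act Tid D)} (hB : StoreBal τ) (hS : SCshape τ)
    {j : ℕ} {t : Tid} {a v : D} (hj : τ[j]? = some (.store t a v)) :
    ∃ i, j = i + 1 ∧ τ[i]? = some (.issue t) ∧
      nodeAt τ j = some (t, rankAt τ i) ∧ nodeAt τ i = some (t, rankAt τ i) := by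
  obtain ⟨i, hji, hi, hcnt, hios⟩ := sc_store_struct hB hS hj
  refine ⟨i, hji, hi, ?_, ?_⟩
  · simp only [nodeAt, hj, hios, Option.map_some]
  · have := nodeAt_nonstore hi (by simp [Act.isStore])
    simpa [Act.thread] using this

lemma rank_lt_of_lt {τ : List (Act Tid D)} {i j : ℕ} {a b : Act Tid D}
    (hi : τ[i]? = some a) (hj : τ[j]? = some b) (ht : a.thread = b.thread)
    (ha : ¬ a.isStore) (hij : i < j) : rankAt τ i < rankAt τ j := by
  rw [rankAt_eq hi, rankAt_eq hj, ht]
  exact cntP_lt hi ⟨ht, ha⟩ hij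

/-- Non-store position realizing a trace node. -/
def NSnode (τ : List (Act Tid D)) (q : ℕ) (n : Tid × ℕ) : Prop :=
  ∃ a, τ[q]? = some a ∧ ¬ a.isStore ∧ a.thread = n.1 ∧ rankAt τ q = n.2

lemma NSnode_nodeAt {τ : List (Act Tid D)} {q : ℕ} {n : Tid × ℕ} (h : NSnode τ q n) :
    nodeAt τ q = some n := by
  obtain ⟨a, hq, ha, ht, hr⟩ := h
  rw [nodeAt_nonstore hq ha, ht, hr]

lemma NSnode_unique {τ : List (Act Tid D)} {q q' : ℕ} {n : Tid × ℕ}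
    (h : NSnode τ q n) (h' : NSnode τ q' n) : q = q' := by
  obtain ⟨a, hq, ha, hta, hra⟩ := h
  obtain ⟨b, hq', hb, htb, hrb⟩ := h'
  rcases lt_trichotomy q q' with hlt | heq | hgt
  · have := rank_lt_of_lt hq hq' (hta.trans htb.symm) ha hlt
    omega
  · exact heq
  · have := rank_lt_of_lt hq' hq (htb.trans hta.symm) hb hgt
    omega

lemma threadNodes_len (τ : List (Act Tid D)) (t : Tid) :
    (threadNodes τ t).length = cntP τ (fun x => x.thread = t ∧ ¬ x.isStore) τ.length := by
  unfold threadNodes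
  rw [mergeStores_length, List.filter_filter]
  unfold cntP
  rw [List.take_length]
  congr 1
  apply List.filter_congr
  intro x _
  rw [Bool.eq_iff_iff]
  simp only [Bool.and_eq_true, nsb_iff, decide_eq_true_eq]
  tauto

lemma exists_NSnode {τ : List (Act Tid D)} {t : Tid} {r : ℕ}
    (hr : r < cntP τ (fun x => x.thread = t ∧ ¬ x.isStore) τ.length) :
    ∃ q, NSnode τ q (t, r) := by
  classical
  set f : Act Tid D → Bool := fun a => decide (a.thread = t ∧ ¬ a.isStore) with hfdef
  have hf : ∀ a, f a = true ↔ (a.thread = t ∧ ¬ a.isStore) := by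
    intro a; rw [hfdef]; simp
  have hlen : (τ.filter f).length = cntP τ (fun x => x.thread = t ∧ ¬ x.isStore) τ.length := by
    rw [← cntP_filter_eq hf τ.length, List.take_length]
  rw [← hlen] at hr
  obtain ⟨q, hq, hfx, hcnt⟩ := filter_getElem_pos _ _ _ (List.getElem?_eq_getElem hr)
  have hpx := (hf _).mp hfx
  refine ⟨q, _, hq, hpx.2, hpx.1, ?_⟩
  rw [rankAt_eq hq]
  simp only [hpx.1]
  rw [← cntP_filter_eq hf q]
  exact hcnt


/-! #### Trace labels vs. positions -/

lemma hf_comb (t : Tid) : ∀ a : Act Tid D,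
    (nsb a && decide (a.thread = t)) = true ↔ (a.thread = t ∧ ¬ a.isStore) := by
  intro a
  simp only [Bool.and_eq_true, nsb_iff, decide_eq_true_eq]
  tauto

lemma hf_issue (t : Tid) : ∀ a : Act Tid D,
    (isb a && (nsb a && decide (a.thread = t))) = true ↔ isIssueOf t a := by
  intro a
  simp only [Bool.and_eq_true, nsb_iff, isb_iff, decide_eq_true_eq, isIssueOf]
  cases a <;> simp [Act.isIssue, Act.isStore, Act.thread] <;> tauto

lemma hf_store (t : Tid) : ∀ a : Act Tid D,
    (fun a => decide (isStoreOf t a)) a = true ↔ isStoreOf t a := by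
  intro a; simp

lemma rankAt_filter {τ : List (Act Tid D)} {t : Tid} {q : ℕ} {x : Act Tid D}
    (hq : τ[q]? = some x) (hxt : x.thread = t) :
    rankAt τ q = ((τ.take q).filter fun a => nsb a && decide (a.thread = t)).length := by
  rw [rankAt_eq hq]
  simp only [hxt]
  exact (cntP_filter_eq (hf_comb t) q).symm

lemma labAt_pos_nonstore {τ : List (Act Tid D)} {t : Tid} {q : ℕ} {x : Act Tid D}
    (hq : τ[q]? = some x) (hx : ¬ x.isStore) (hxi : ¬ x.isIssue) (hxt : x.thread = t) :
    (traceOf τ).labAt (t, rankAt τ q) = some x := by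
  have hidx := (filter_take_getElem (l := τ)
      (f := fun a => nsb a && decide (a.thread = t)) hq ((hf_comb t x).mpr ⟨hxt, hx⟩)).2
  simp only [traceOf, Trace.labAt]
  show (threadNodes τ t)[rankAt τ q]? = some x
  unfold threadNodes
  apply msGet_nonissue
  · rw [List.filter_filter, rankAt_filter hq hxt]
    exact hidx
  · exact hxi

lemma labAt_pos_issue {τ : List (Act Tid D)} (hB : StoreBal τ) (hS : SCshape τ)
    {q : ℕ} {t : Tid} (hq : τ[q]? = some (.issue t)) :
    ∃ a v, τ[q + 1]? = some (.store t a v) ∧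
      (traceOf τ).labAt (t, rankAt τ q) = some (.store t a v) := by
  obtain ⟨a, v, hst⟩ := hS q t hq
  obtain ⟨i, hii, hi, hcnt, _⟩ := sc_store_struct hB hS hst
  obtain rfl : q = i := by omega
  refine ⟨a, v, hst, ?_⟩
  have hxt : (Act.issue t : Act Tid D).thread = t := rfl
  have hidx := filter_take_getElem (l := τ)
      (f := fun a => nsb a && decide (a.thread = t)) hq
      ((hf_comb t _).mpr ⟨rfl, by simp [Act.isStore]⟩)
  have hk : ((((τ.filter fun a => decide (a.thread = t)).filter nsb).take
        (rankAt τ q)).filter isb).length = cntP τ (isIssueOf t) q := by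
    rw [List.filter_filter, rankAt_filter hq hxt, hidx.1, List.filter_filter]
    exact cntP_filter_eq (hf_issue t) q
  have hsidx := (filter_take_getElem (l := τ) (q := q + 1)
      (f := fun a => decide (isStoreOf t a)) hst
      ((hf_store t (Act.store t a v)).mpr ⟨trivial, rfl⟩)).2
  rw [cntP_filter_eq (hf_store t) (q + 1), ← hcnt] at hsidx
  have hklt : cntP τ (isIssueOf t) q
      < (τ.filter fun a => decide (isStoreOf t a)).length :=
    (List.getElem?_eq_some_iff.mp hsidx).1
  simp only [traceOf, Trace.labAt]
  show (threadNodes τ t)[rankAt τ q]? = some (.store t a v)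
  unfold threadNodes
  rw [msGet_issue _ _ _ (cntP τ (isIssueOf t) q) t ?_ hk hklt]
  · exact hsidx
  · rw [List.filter_filter, rankAt_filter hq hxt]
    exact hidx.2

lemma labAt_rev {τ : List (Act Tid D)} (hB : StoreBal τ) (hS : SCshape τ)
    {t : Tid} {r : ℕ} {x : Act Tid D}
    (hlab : (traceOf τ).labAt (t, r) = some x) :
    ∃ q y, τ[q]? = some y ∧ ¬ y.isStore ∧ y.thread = t ∧ rankAt τ q = r ∧
      (y = x ∨ (τ[q + 1]? = some x ∧ x.isStore)) := by
  simp only [traceOf, Trace.labAt] at hlab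
  have hlab' : (threadNodes τ t)[r]? = some x := hlab
  unfold threadNodes at hlab'
  obtain ⟨y, hy, hcase⟩ := msGet_rev _ _ _ _ hlab'
  rw [List.filter_filter] at hy
  obtain ⟨q, hq, hfy, hcnt⟩ := filter_getElem_pos _ _ _ hy
  have hpy := (hf_comb t y).mp hfy
  have hrank : rankAt τ q = r := by
    rw [rankAt_filter hq hpy.1, hcnt]
  refine ⟨q, y, hq, hpy.2, hpy.1, hrank, ?_⟩
  rcases hcase with hcase | ⟨hyi, hs⟩
  · exact Or.inl hcase
  · right
    -- y is an issue of thread t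
    have hy_issue : y = Act.issue t := by
      cases y with
      | issue t' => cases hpy.1; rfl
      | store _ _ _ => exact absurd hyi (by simp [Act.isIssue])
      | load _ _ _ => exact absurd hyi (by simp [Act.isIssue])
      | loc _ => exact absurd hyi (by simp [Act.isIssue])
    subst hy_issue
    obtain ⟨a, v, hst⟩ := hS q t hq
    obtain ⟨i, hii, hi, hcntIS, _⟩ := sc_store_struct hB hS hst
    obtain rfl : q = i := by omega
    -- compute the index used in msGet_rev
    have hidx := filter_take_getElem (l := τ)
        (f := fun a => nsb a && decide (a.thread = t)) hq
        ((hf_comb t _).mpr ⟨rfl, by simp [Act.isStore]⟩)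
    have hk : ((((τ.filter fun a => decide (a.thread = t)).filter nsb).take
          r).filter isb).length = cntP τ (isIssueOf t) q := by
      rw [List.filter_filter, ← hrank, rankAt_filter hq (show (Act.issue t).thread = t from rfl), hidx.1, List.filter_filter]
      exact cntP_filter_eq (hf_issue t) q
    rw [hk] at hs
    have hsidx := (filter_take_getElem (l := τ) (q := q + 1)
        (f := fun a => decide (isStoreOf t a)) hst
        ((hf_store t (Act.store t a v)).mpr ⟨trivial, rfl⟩)).2
    rw [cntP_filter_eq (hf_store t) (q + 1), ← hcntIS] at hsidx
    rw [hsidx] at hs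
    cases hs
    exact ⟨hst, trivial⟩


/-! #### Acyclicity of SC traces -/

lemma sc_no_pending {τ : List (Act Tid D)} (hB : StoreBal τ) (hS : SCshape τ)
    {t : Tid} {a : D} {p i : ℕ} (hp : pendingIssue τ t a p i) : False := by
  obtain ⟨hip, hi, j, v, hsoi, hpj, hj⟩ := hp
  obtain ⟨a', v', hst, hsoi'⟩ := sc_storeOfIssue hB hS hi
  rw [hsoi'] at hsoi
  cases hsoi
  omega

lemma sc_cf_no_src {τ : List (Act Tid D)} (hB : StoreBal τ) (hS : SCshape τ)
    {p : ℕ} {t : Tid} {a v : D} {m : Tid × ℕ}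
    (hld : τ[p]? = some (.load t a v)) (hnode : nodeAt τ p = some m)
    (hnone : ¬ ∃ m', srcRel τ m' m) :
    ∀ j t' v', j < p → τ[j]? ≠ some (.store t' a v') := by
  intro j t' v' hjp hj
  apply hnone
  classical
  set Q : ℕ → Prop := fun j0 => ∃ t0 v0, τ[j0]? = some (.store t0 a v0) with hQdef
  have hQj : Q j := ⟨t', v', hj⟩
  have hjle : j ≤ p - 1 := by omega
  have hQ0 : Q (Nat.findGreatest Q (p - 1)) := Nat.findGreatest_spec hjle hQj
  set j₀ := Nat.findGreatest Q (p - 1) with hj0def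
  obtain ⟨t0, v0, hj0⟩ := hQ0
  have hj0p : j₀ ≤ p - 1 := Nat.findGreatest_le _
  obtain ⟨i0, hii0, hiss0, hnodej0, _⟩ := nodeAt_store_sc hB hS hj0
  refine ⟨(t0, rankAt τ i0), p, t, a, v, hld, hnode, Or.inr ⟨?_, j₀, by omega, ⟨t0, v0, hj0⟩, ?_, hnodej0⟩⟩
  · rintro ⟨i, hpend⟩
    exact sc_no_pending hB hS hpend
  · intro j' hj'p hst'
    by_contra hgt
    push_neg at hgt
    exact Nat.findGreatest_is_greatest hgt (by omega) hst'

lemma sc_hb_step {τ : List (Act Tid D)} (hB : StoreBal τ) (hS : SCshape τ)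
    {m n : Tid × ℕ} (h : (traceOf τ).hb m n) :
    ∃ p q, NSnode τ p m ∧ NSnode τ q n ∧ p < q := by
  rcases (show (traceOf τ).po m n ∨ soRel τ m n ∨ srcRel τ m n ∨ (traceOf τ).cf m n from h)
    with hpo | hso | hsrc | hcf
  · -- program order
    obtain ⟨ht, hlt, hlen⟩ := hpo
    obtain ⟨mt, mr⟩ := m
    obtain ⟨nt, nr⟩ := n
    simp only at ht hlt hlen
    subst ht
    have hlen' : nr < cntP τ (fun x => x.thread = mt ∧ ¬ x.isStore) τ.length := by
      have := threadNodes_len τ mt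
      simp only [traceOf] at hlen
      omega
    obtain ⟨q, hq⟩ := exists_NSnode hlen'
    obtain ⟨p, hp⟩ := exists_NSnode (lt_trans hlt hlen')
    refine ⟨p, q, hp, hq, ?_⟩
    obtain ⟨ap, hp1, hp2, hp3, hp4⟩ := hp
    obtain ⟨aq, hq1, hq2, hq3, hq4⟩ := hq
    rcases lt_trichotomy p q with h1 | h1 | h1
    · exact h1
    · subst h1; rw [hp1] at hq1; cases hq1; simp at hp4 hq4; omega
    · have := rank_lt_of_lt hq1 hp1 (hq3.trans hp3.symm) hq2 h1
      simp only [hp4, hq4] at this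
      omega
  · obtain ⟨i, j, a, hij, ⟨ti, vi, hi⟩, ⟨tj, vj, hj⟩, hmi, hnj⟩ := hso
    obtain ⟨i', hii', hiss, hnodei, _⟩ := nodeAt_store_sc hB hS hi
    obtain ⟨j', hjj', hjss, hnodej, _⟩ := nodeAt_store_sc hB hS hj
    rw [hmi] at hnodei
    rw [hnj] at hnodej
    cases hnodei; cases hnodej
    refine ⟨i', j', ⟨.issue ti, hiss, by simp [Act.isStore], rfl, rfl⟩,
      ⟨.issue tj, hjss, by simp [Act.isStore], rfl, rfl⟩, by omega⟩
  · obtain ⟨p0, t, a, v, hld, hnoden, hcase⟩ := hsrc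
    have hnq : NSnode τ p0 n := by
      have := nodeAt_nonstore hld (by simp [Act.isStore])
      rw [hnoden] at this
      cases this
      exact ⟨_, hld, by simp [Act.isStore], rfl, rfl⟩
    rcases hcase with ⟨i, hpend, _, _⟩ | ⟨hnp, j, hjp, ⟨t', v', hj⟩, hmax, hmj⟩
    · exact absurd hpend (fun hp => sc_no_pending hB hS hp)
    · obtain ⟨j', hjj', hjss, hnodej, _⟩ := nodeAt_store_sc hB hS hj
      rw [hmj] at hnodej
      cases hnodej
      exact ⟨j', p0, ⟨.issue t', hjss, by simp [Act.isStore], rfl, rfl⟩, hnq, by omega⟩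
  · obtain ⟨a, ⟨tm, vm, hlm⟩, ⟨tn, vn, hln⟩, hcase⟩ := hcf
    rcases hcase with ⟨p0, hsrc, hso⟩ | hns
    · -- the load has a source
      obtain ⟨pl, t, a', v, hld, hnodem, hcase2⟩ := hsrc
      have hmeq : m = (t, rankAt τ pl) := by
        have := nodeAt_nonstore hld (by simp [Act.isStore])
        rw [hnodem] at this; cases this; rfl
      have hnm : NSnode τ pl m := by
        rw [hmeq]; exact ⟨_, hld, by simp [Act.isStore], rfl, rfl⟩
      -- address of the load is a
      have hlm' := labAt_pos_nonstore hld (x := .load t a' v)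
        (by simp [Act.isStore]) (by simp [Act.isIssue])
        (show (Act.load t a' v).thread = t from rfl)
      rw [← hmeq] at hlm'
      rw [hlm'] at hlm
      simp only [Option.some.injEq, Act.load.injEq] at hlm
      have haa : a' = a := hlm.2.1
      obtain ⟨i, j, a2, hij, ⟨ti, vi, hi⟩, ⟨tj, vj, hj⟩, hip0, hjn⟩ := hso
      obtain ⟨j', hjj', hjss, hnodej, _⟩ := nodeAt_store_sc hB hS hj
      have hneq : n = (tj, rankAt τ j') := by rw [hjn] at hnodej; cases hnodej; rfl
      have hnn : NSnode τ j' n := by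
        rw [hneq]; exact ⟨_, hjss, by simp [Act.isStore], rfl, rfl⟩
      -- address of the store n is a
      obtain ⟨a3, v3, hst3, hlab3⟩ := labAt_pos_issue hB hS hjss
      rw [← hjj'] at hst3
      rw [hj] at hst3
      simp only [Option.some.injEq, Act.store.injEq] at hst3
      have ha23 : a2 = a3 := hst3.2.1
      rw [← hneq, hln] at hlab3
      simp only [Option.some.injEq, Act.store.injEq] at hlab3
      have ha3 : a3 = a := hlab3.2.1.symm
      -- source case analysis
      rcases hcase2 with ⟨i2, hpend, _, _⟩ | ⟨hnp, j0, hj0p, ⟨t0, v0, hj0⟩, hmax, hmj0⟩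
      · exact absurd hpend (fun hp => sc_no_pending hB hS hp)
      · -- i = j0
        obtain ⟨i', hii', hiss, hnodei, _⟩ := nodeAt_store_sc hB hS hi
        obtain ⟨j0', hj0j0', hj0ss, hnodej0, _⟩ := nodeAt_store_sc hB hS hj0
        have hp0i : p0 = (ti, rankAt τ i') := by
          rw [hip0] at hnodei; exact Option.some.inj hnodei
        have hp0j0 : p0 = (t0, rankAt τ j0') := by
          rw [hmj0] at hnodej0; exact Option.some.inj hnodej0
        have hieq : i' = j0' := NSnode_unique (n := p0)
          ⟨.issue ti, hiss, by simp [Act.isStore], by simp [hp0i, Act.thread], by simp [hp0i]⟩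
          ⟨.issue t0, hj0ss, by simp [Act.isStore], by simp [hp0j0, Act.thread], by simp [hp0j0]⟩
        have hij0 : i = j0 := by omega
        -- j > pl
        have hjpl : pl < j := by
          rcases lt_trichotomy j pl with h1 | h1 | h1
          · exfalso
            have := hmax j h1 ⟨tj, vj, by rw [show a2 = a' from by rw [ha23, ha3, haa]] at hj; exact hj⟩
            omega
          · exfalso; rw [h1, hld] at hj; cases hj
          · exact h1
        refine ⟨pl, j', hnm, hnn, ?_⟩
        rcases lt_trichotomy pl j' with h1 | h1 | h1
        · exact h1
        · exfalso; rw [← h1, hld] at hjss; cases hjss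
        · omega
    · -- no source: no store to a before the load
      obtain ⟨mq, my, hmq, hmys, hmyt, hmr, hmcase⟩ := labAt_rev hB hS hlm
      have hmy : my = Act.load tm a vm := by
        rcases hmcase with h1 | ⟨-, h2⟩
        · exact h1
        · simp [Act.isStore] at h2
      subst hmy
      have hnm : NSnode τ mq m := ⟨_, hmq, by simp [Act.isStore], hmyt, hmr⟩
      obtain ⟨nq, ny, hnq, hnys, hnyt, hnr, hncase⟩ := labAt_rev hB hS hln
      have hnn : NSnode τ nq n := ⟨_, hnq, hnys, hnyt, hnr⟩
      have hnst : τ[nq + 1]? = some (Act.store tn a vn) := by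
        rcases hncase with h1 | ⟨h2, -⟩
        · exfalso; rw [h1] at hnys; simp [Act.isStore] at hnys
        · exact h2
      have hnostore := sc_cf_no_src hB hS hmq (NSnode_nodeAt hnm) hns
      refine ⟨mq, nq, hnm, hnn, ?_⟩
      rcases lt_trichotomy mq nq with h1 | h1 | h1
      · exact h1
      · exfalso
        rw [← h1, hmq] at hnq
        cases hnq
        -- then m = n, but labels differ
        have : m = n := by
          obtain ⟨m1, m2⟩ := m; obtain ⟨n1, n2⟩ := n
          simp only at hmyt hnyt hmr hnr
          rw [← h1] at hnr
          simp only at *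
          rw [← hmyt, ← hmr, ← hnyt, ← hnr]
        rw [this, hln] at hlm
        cases hlm
      · exfalso
        rcases Nat.lt_or_ge (nq + 1) mq with h2 | h2
        · exact hnostore (nq + 1) tn vn h2 hnst
        · have : nq + 1 = mq := by omega
          rw [this, hmq] at hnst
          cases hnst

lemma sc_transGen_pos {τ : List (Act Tid D)} (hB : StoreBal τ) (hS : SCshape τ)
    {m n : Tid × ℕ} (h : Relation.TransGen (traceOf τ).hb m n) :
    ∃ p q, NSnode τ p m ∧ NSnode τ q n ∧ p < q := by
  induction h with
  | single h1 => exact sc_hb_step hB hS h1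
  | tail h1 h2 ih =>
    obtain ⟨p, q, hp, hq, hpq⟩ := ih
    obtain ⟨q2, q3, hq2, hq3, hq23⟩ := sc_hb_step hB hS h2
    have : q = q2 := NSnode_unique hq hq2
    exact ⟨p, q3, hp, hq3, by omega⟩

lemma sc_acyclic {τ : List (Act Tid D)} (hB : StoreBal τ) (hS : SCshape τ) :
    ¬ ∃ x, Relation.TransGen (traceOf τ).hb x x := by
  rintro ⟨x, hx⟩
  obtain ⟨p, q, hp, hq, hpq⟩ := sc_transGen_pos hB hS hx
  have : p = q := NSnode_unique hp hq
  omega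


lemma ww_get (att : Tid) (q1 q2 q3 q4 : List (Act Tid D)) (aL vL aS vS : D) :
    (witnessWord att q1 q2 q3 q4 aL vL aS vS)[q1.length]? = some (.issue att) ∧
    (witnessWord att q1 q2 q3 q4 aL vL aS vS)[q1.length + 1 + q2.length]?
      = some (.load att aL vL) ∧
    (witnessWord att q1 q2 q3 q4 aL vL aS vS)[q1.length + 1 + q2.length + 1 + q3.length]?
      = some (.store att aS vS) := by
  unfold witnessWord
  refine ⟨?_, ?_, ?_⟩
  · rw [List.getElem?_append_right le_rfl]
    simp
  · rw [List.getElem?_append_right (by omega),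
      show q1.length + 1 + q2.length - q1.length = q2.length + 1 from by omega,
      List.getElem?_cons_succ, List.getElem?_append_right le_rfl]
    simp
  · rw [List.getElem?_append_right (by omega),
      show q1.length + 1 + q2.length + 1 + q3.length - q1.length
        = (q2.length + 1 + q3.length) + 1 from by omega,
      List.getElem?_cons_succ, List.getElem?_append_right (by omega),
      show q2.length + 1 + q3.length - q2.length = q3.length + 1 from by omega,
      List.getElem?_cons_succ, List.getElem?_append_right le_rfl]
    simp

end Aux

/-- If `τ` is a TSO witness for an attack
`A = (attacker, stinst, ldinst)` in a parallel program `P`, with delayed store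
action `st` and load action `ld` as in the witness shape, then the trace
`Tr(τ)` contains the happens-before cycle `st po⁺ ld hb⁺ st`; consequently
`P` is not robust. -/
theorem witness_gives_cycle_and_nonrobustness {Tid Lbl D : Type} [Zero D]
    (P : Program Tid Lbl D) (A : Attack Tid Lbl D)
    (τ₁ τ₂ τ₃ τ₄ : List (Act Tid D)) (aL vL aS vS : D)
    (hw : WitnessShape P A τ₁ τ₂ τ₃ τ₄ aL vL aS vS) :
    (let τ := witnessWord A.attacker τ₁ τ₂ τ₃ τ₄ aL vL aS vS
     let pLd := τ₁.length + 1 + τ₂.length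
     let pSt := τ₁.length + 1 + τ₂.length + 1 + τ₃.length
     ∃ nSt nLd, nodeAt τ pSt = some nSt ∧ nodeAt τ pLd = some nLd ∧
       Relation.TransGen (traceOf τ).po nSt nLd ∧
       Relation.TransGen (traceOf τ).hb nLd nSt) ∧
    ¬ Robust P := by
  obtain ⟨hvalid, hne, hmain⟩ := hw
  obtain ⟨hrun, hios, hW1, hW2a, hW2b, hW3a, hW3, hW4a, hW4b⟩ := hmain
  set att := A.attacker with hatt
  set τ : List (Act Tid D) := witnessWord att τ₁ τ₂ τ₃ τ₄ aL vL aS vS with hτ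
  set pIsu : ℕ := τ₁.length with hpIsu
  set pLd : ℕ := τ₁.length + 1 + τ₂.length with hpLd
  set pSt : ℕ := τ₁.length + 1 + τ₂.length + 1 + τ₃.length with hpSt
  obtain ⟨hgIsu, hgLd, hgSt⟩ := ww_get att τ₁ τ₂ τ₃ τ₄ aL vL aS vS
  -- node of the delayed store
  have hnodeSt : nodeAt τ pSt = some (att, rankAt τ pIsu) := by
    have hgSt' : τ[pSt]? = some (Act.store att aS vS) := hgSt
    simp only [nodeAt, hgSt', hios, Option.map_some]
  have hnodeLd : nodeAt τ pLd = some (att, rankAt τ pLd) := by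
    have := nodeAt_nonstore hgLd (by simp [Act.isStore])
    simpa [Act.thread] using this
  -- program order step from the store node to the load node
  have hrlt : rankAt τ pIsu < rankAt τ pLd :=
    rank_lt_of_lt hgIsu hgLd rfl (by simp [Act.isStore]) (by omega)
  have hpLdlen : pLd < τ.length := (List.getElem?_eq_some_iff.mp hgLd).1
  have hrlen : rankAt τ pLd < (threadNodes τ att).length := by
    rw [threadNodes_len, rankAt_eq hgLd]
    exact cntP_lt hgLd ⟨rfl, by simp [Act.isStore]⟩ hpLdlen
  have hpo : (traceOf τ).po (att, rankAt τ pIsu) (att, rankAt τ pLd) :=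
    ⟨rfl, hrlt, hrlen⟩
  -- happens-before from the load node back to the store node, from (W3)
  obtain ⟨m', n', hm', hn', htg⟩ := hW3 pSt (by omega) le_rfl
  rw [hnodeLd] at hm'
  rw [hnodeSt] at hn'
  cases hm'; cases hn'
  have hcyc1 : Relation.TransGen (traceOf τ).po (att, rankAt τ pIsu) (att, rankAt τ pLd) :=
    Relation.TransGen.single hpo
  refine ⟨⟨(att, rankAt τ pIsu), (att, rankAt τ pLd), hnodeSt, hnodeLd, hcyc1, htg⟩, ?_⟩
  -- non-robustness
  intro hrob
  obtain ⟨ρ, c, hRun, hacts, hbuf, -⟩ := hrun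
  have hTSO : TSOComput P τ := ⟨ρ, c, hRun, hacts, hbuf⟩
  have hmem : traceOf τ ∈ TSOTraces P := ⟨τ, hTSO, rfl⟩
  rw [show TSOTraces P = SCTraces P from hrob] at hmem
  obtain ⟨τ', ⟨hTSO', hshape'⟩, htr⟩ := hmem
  obtain ⟨ρ', c', hRun', hacts', hbuf'⟩ := hTSO'
  have hB : StoreBal τ' := hacts' ▸ run_storeBal hRun'
  have hcycle : Relation.TransGen (traceOf τ).hb
      (att, rankAt τ pIsu) (att, rankAt τ pIsu) :=
    Relation.TransGen.head (r := (traceOf τ).hb) (Or.inl hpo) htg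
  rw [← htr] at hcycle
  exact sc_acyclic hB hshape' ⟨_, hcycle⟩

end

end TSORob
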